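/- arXiv:math/0507159 — 6 statements merged into one kernel-verified Lean document; each statement's English description precedes it below -/
import Mathlib

section
/- Let A and B be n×n real matrices forming a regular matrix pencil, i.e. there exists λ ∈ ℝ with det(λ·A + B) ≠ 0. Then there exist invertible n×n real matrices P and Q and natural numbers d, q with d + q = n such that P·A·Q is the block-diagonal matrix with blocks I_d (the d×d identity) and N, and P·B·Q is the block-diagonal matrix with blocks J and I_q (the q×q identity), where N is a nilpotent q×q real matrix and J is some d×d real matrix. -/
open Module Matrix

section Aux

variable {n : ℕ} {s : Type*} [Fintype s] [DecidableEq s]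

private lemma km_key (ee : s ≃ Fin n) (Y : Matrix s (Fin n) ℝ) (Z : Matrix (Fin n) s ℝ) :
    Y.submatrix ee.symm id * Z.submatrix id ee.symm = (Y * Z).submatrix ee.symm ee.symm := by
  have := Matrix.submatrix_mul_equiv Y Z ee.symm (Equiv.refl (Fin n)) ee.symm
  simpa using this

private lemma km_keyL (ee : s ≃ Fin n) (Y : Matrix s (Fin n) ℝ) (W : Matrix (Fin n) (Fin n) ℝ) :
    Y.submatrix ee.symm id * W = (Y * W).submatrix ee.symm id := by
  have := Matrix.submatrix_mul_equiv Y W ee.symm (Equiv.refl (Fin n)) id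
  simpa using this

private lemma km_keyR (ee : s ≃ Fin n) (Z : Matrix (Fin n) s ℝ) (Y : Matrix s (Fin n) ℝ) :
    Z.submatrix id ee.symm * Y.submatrix ee.symm id = Z * Y := by
  have := Matrix.submatrix_mul_equiv Z Y id ee.symm id
  simpa using this

end Aux

set_option maxHeartbeats 2000000 in
/-- **Weierstrass–Kronecker canonical form.** If `(A, B)` is a regular matrix pencil
(i.e. `det (l • A + B) ≠ 0` for some real `l`), then there are invertible matrices
`P, Q` and `d + q = n` such that `P * A * Q = blockdiag (I_d, N)` and
`P * B * Q = blockdiag (J, I_q)` with `N` nilpotent. -/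
theorem kronecker_canonical_form {n : ℕ} (A B : Matrix (Fin n) (Fin n) ℝ)
    (hreg : ∃ l : ℝ, (l • A + B).det ≠ 0) :
    ∃ (d q : ℕ) (h : d + q = n) (P Q : Matrix (Fin n) (Fin n) ℝ),
      IsUnit P ∧ IsUnit Q ∧
      ∃ (J : Matrix (Fin d) (Fin d) ℝ) (N : Matrix (Fin q) (Fin q) ℝ),
        IsNilpotent N ∧
        P * A * Q =
          Matrix.reindex (finSumFinEquiv.trans (finCongr h)) (finSumFinEquiv.trans (finCongr h))
            (Matrix.fromBlocks (1 : Matrix (Fin d) (Fin d) ℝ) 0 0 N) ∧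
        P * B * Q =
          Matrix.reindex (finSumFinEquiv.trans (finCongr h)) (finSumFinEquiv.trans (finCongr h))
            (Matrix.fromBlocks J 0 0 (1 : Matrix (Fin q) (Fin q) ℝ)) := by
  classical
  obtain ⟨l, hl⟩ := hreg
  set C : Matrix (Fin n) (Fin n) ℝ := (l • A + B)⁻¹ with hCdef
  have hdet : IsUnit (l • A + B).det := isUnit_iff_ne_zero.mpr hl
  have hC1 : C * (l • A + B) = 1 := Matrix.nonsing_inv_mul _ hdet
  have hC1' : (l • A + B) * C = 1 := Matrix.mul_nonsing_inv _ hdet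
  set Mm : Matrix (Fin n) (Fin n) ℝ := C * A with hMdef
  have hCB : C * B = 1 - l • Mm := by
    have h2 : l • Mm + C * B = 1 := by
      rw [← hC1, Matrix.mul_add, Matrix.mul_smul, hMdef]
    exact eq_sub_of_add_eq' h2
  set π := Pi.basisFun ℝ (Fin n) with hπdef
  set f : Module.End ℝ (Fin n → ℝ) := Matrix.toLinAlgEquiv π Mm with hfdef
  have hfM : LinearMap.toMatrix π π f = Mm := by
    have h1 : LinearMap.toMatrixAlgEquiv π f = Mm :=
      LinearMap.toMatrixAlgEquiv_toLinAlgEquiv π Mm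
    simpa [LinearMap.toMatrixAlgEquiv, AlgEquiv.ofLinearEquiv_apply] using h1
  obtain ⟨k, hk1, hcompl⟩ :
      ∃ k, 1 ≤ k ∧ IsCompl (LinearMap.ker (f ^ k)) (LinearMap.range (f ^ k)) := by
    obtain ⟨k, hk⟩ :=
      ((Filter.eventually_ge_atTop 1).and f.eventually_isCompl_ker_pow_range_pow).exists
    exact ⟨k, hk.1, hk.2⟩
  set K := LinearMap.ker (f ^ k) with hKdef
  set Rg := LinearMap.range (f ^ k) with hRgdef
  have hKinv : ∀ x ∈ K, f x ∈ K := by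
    intro x hx
    have hx' : (f ^ k) x = 0 := hx
    show (f ^ k) (f x) = 0
    have hc : (f ^ k) * f = f * (f ^ k) := (pow_mul_comm' f k)
    calc (f ^ k) (f x) = ((f ^ k) * f) x := rfl
      _ = (f * (f ^ k)) x := by rw [hc]
      _ = f ((f ^ k) x) := rfl
      _ = 0 := by rw [hx', map_zero]
  have hRinv : ∀ x ∈ Rg, f x ∈ Rg := by
    rintro x ⟨y, rfl⟩
    refine ⟨f y, ?_⟩
    have hc : (f ^ k) * f = f * (f ^ k) := (pow_mul_comm' f k)
    calc (f ^ k) (f y) = ((f ^ k) * f) y := rfl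
      _ = (f * (f ^ k)) y := by rw [hc]
      _ = f ((f ^ k) y) := rfl
  set fK : K →ₗ[ℝ] K := f.restrict hKinv with hfKdef
  set fR : Rg →ₗ[ℝ] Rg := f.restrict hRinv with hfRdef
  have hfKnil : fK ^ k = 0 := by
    rw [hfKdef, Module.End.pow_restrict]
    refine LinearMap.ext fun x => Subtype.ext ?_
    simpa [LinearMap.restrict_apply] using (LinearMap.mem_ker.mp x.2)
  have hfRinj : Function.Injective fR := by
    rw [← LinearMap.ker_eq_bot, Submodule.eq_bot_iff]
    rintro ⟨x, hx⟩ hker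
    have hfx : f x = 0 := by
      simpa [hfRdef, LinearMap.restrict_apply, Subtype.ext_iff] using hker
    have hxK : x ∈ K := by
      obtain ⟨j, rfl⟩ : ∃ j, k = j + 1 := ⟨k - 1, by omega⟩
      show (f ^ (j + 1)) x = 0
      rw [pow_succ, Module.End.mul_apply, hfx, map_zero]
    have hbot : x ∈ K ⊓ Rg := ⟨hxK, hx⟩
    rw [hcompl.inf_eq_bot] at hbot
    exact Subtype.ext (by simpa using hbot)
  have hfRunit : IsUnit fR := by
    rw [Module.End.isUnit_iff]
    exact ⟨hfRinj, LinearMap.injective_iff_surjective.mp hfRinj⟩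
  set d := finrank ℝ Rg with hddef
  set q := finrank ℝ K with hqdef
  have h : d + q = n := by
    have h1 := Submodule.finrank_add_eq_of_isCompl hcompl
    rw [Module.finrank_fin_fun] at h1
    omega
  set bR : Basis (Fin d) ℝ Rg := Module.finBasis ℝ Rg with hbRdef
  set bK : Basis (Fin q) ℝ K := Module.finBasis ℝ K with hbKdef
  set e : (Rg × K) ≃ₗ[ℝ] (Fin n → ℝ) := Submodule.prodEquivOfIsCompl Rg K hcompl.symm with hedef
  set bp : Basis (Fin d ⊕ Fin q) ℝ (Rg × K) := bR.prod bK with hbpdef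
  set bS : Basis (Fin d ⊕ Fin q) ℝ (Fin n → ℝ) := bp.map e with hbSdef
  set M₁ := LinearMap.toMatrix bR bR fR with hM₁def
  set M₀ := LinearMap.toMatrix bK bK fK with hM₀def
  have hcomm : ∀ x : Rg × K, f (e x) = e ((fR.prodMap fK) x) := by
    rintro ⟨x, y⟩
    simp [hedef, Submodule.coe_prodEquivOfIsCompl', map_add, hfRdef, hfKdef,
      LinearMap.restrict_coe_apply]
  have hbSf : LinearMap.toMatrix bS bS f = Matrix.fromBlocks M₁ 0 0 M₀ := by
    rw [hM₁def, hM₀def, ← LinearMap.toMatrix_prodMap bR bK fR fK]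
    ext i j
    rw [LinearMap.toMatrix_apply, LinearMap.toMatrix_apply, hbSdef, Basis.map_apply]
    rw [hcomm (bp j)]
    simp only [Basis.map_repr, LinearEquiv.trans_apply, LinearEquiv.symm_apply_apply, hbpdef]
  set U := π.toMatrix bS with hUdef
  set Vm := bS.toMatrix π with hVmdef
  have hUV : U * Vm = 1 := Basis.toMatrix_mul_toMatrix_flip π bS
  have hVU : Vm * U = 1 := Basis.toMatrix_mul_toMatrix_flip bS π
  have hVMU : Vm * Mm * U = Matrix.fromBlocks M₁ 0 0 M₀ := by
    rw [← hfM, hVmdef, hUdef, basis_toMatrix_mul_linearMap_toMatrix_mul_basis_toMatrix, hbSf]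
  have hM₀nil : IsNilpotent M₀ := by
    refine ⟨k, ?_⟩
    have h1 : M₀ = LinearMap.toMatrixAlgEquiv bK fK := by
      simp [hM₀def, LinearMap.toMatrixAlgEquiv, AlgEquiv.ofLinearEquiv_apply]
    rw [h1, ← map_pow, hfKnil, map_zero]
  have hM₁unit : IsUnit M₁ := by
    have h1 : M₁ = LinearMap.toMatrixAlgEquiv bR fR := by
      simp [hM₁def, LinearMap.toMatrixAlgEquiv, AlgEquiv.ofLinearEquiv_apply]
    rw [h1]
    exact hfRunit.map (LinearMap.toMatrixAlgEquiv bR)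
  have hM₂unit : IsUnit (1 - l • M₀) := (hM₀nil.smul l).isUnit_one_sub
  have hdet1 : IsUnit M₁.det := (Matrix.isUnit_iff_isUnit_det _).mp hM₁unit
  have hdet2 : IsUnit (1 - l • M₀).det := (Matrix.isUnit_iff_isUnit_det _).mp hM₂unit
  have hNnil : IsNilpotent ((1 - l • M₀)⁻¹ * M₀) := by
    have h1 : Commute M₀ (1 - l • M₀) :=
      (Commute.one_right M₀).sub_right ((Commute.refl M₀).smul_right l)
    have h2 : Commute M₀ ((1 - l • M₀)⁻¹) := by
      rw [Matrix.nonsing_inv_eq_ringInverse, ← hM₂unit.unit_spec, Ring.inverse_unit]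
      rw [← hM₂unit.unit_spec] at h1
      exact h1.units_inv_right
    exact h2.symm.isNilpotent_mul_left hM₀nil
  set G := Matrix.fromBlocks M₁ 0 0 M₀ with hGdef
  set D := Matrix.fromBlocks M₁⁻¹ 0 0 ((1 - l • M₀)⁻¹) with hDdef
  set D' := Matrix.fromBlocks M₁ 0 0 (1 - l • M₀) with hD'def
  have hDD' : D * D' = 1 := by
    rw [hDdef, hD'def, Matrix.fromBlocks_multiply]
    simp [Matrix.nonsing_inv_mul _ hdet1, Matrix.nonsing_inv_mul _ hdet2,
      Matrix.fromBlocks_one]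
  have hD'D : D' * D = 1 := by
    rw [hDdef, hD'def, Matrix.fromBlocks_multiply]
    simp [Matrix.mul_nonsing_inv _ hdet1, Matrix.mul_nonsing_inv _ hdet2,
      Matrix.fromBlocks_one]
  set ee : (Fin d ⊕ Fin q) ≃ Fin n := finSumFinEquiv.trans (finCongr h) with heedef
  set P := ((D * Vm) * C).submatrix ee.symm id with hPdef
  set Q := U.submatrix id (⇑ee.symm) with hQdef
  set X := ((l • A + B) * (U * D')).submatrix id (⇑ee.symm) with hXdef
  have hPX : P * X = 1 := by
    rw [hPdef, hXdef, km_key]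
    have hYZ : ((D * Vm) * C) * ((l • A + B) * (U * D')) = 1 := by
      rw [Matrix.mul_assoc (D * Vm) C ((l • A + B) * (U * D')),
        ← Matrix.mul_assoc C (l • A + B) (U * D'), hC1, Matrix.one_mul,
        Matrix.mul_assoc D Vm (U * D'), ← Matrix.mul_assoc Vm U D', hVU, Matrix.one_mul, hDD']
    rw [hYZ, Matrix.submatrix_one_equiv]
  have hXP : X * P = 1 := by
    rw [hPdef, hXdef, km_keyR]
    rw [Matrix.mul_assoc (l • A + B) (U * D') ((D * Vm) * C),
      Matrix.mul_assoc U D' ((D * Vm) * C), ← Matrix.mul_assoc D' (D * Vm) C,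
      ← Matrix.mul_assoc D' D Vm, hD'D, Matrix.one_mul, ← Matrix.mul_assoc U Vm C, hUV,
      Matrix.one_mul, hC1']
  have hPunit : IsUnit P := ⟨⟨P, X, hPX, hXP⟩, rfl⟩
  set Y := Vm.submatrix (⇑ee.symm) id with hYdef
  have hQY : Q * Y = 1 := by
    rw [hQdef, hYdef, km_keyR, hUV]
  have hYQ : Y * Q = 1 := by
    rw [hQdef, hYdef, km_key, hVU, Matrix.submatrix_one_equiv]
  have hQunit : IsUnit Q := ⟨⟨Q, Y, hQY, hYQ⟩, rfl⟩
  refine ⟨d, q, h, P, Q, hPunit, hQunit, M₁⁻¹ * (1 - l • M₁), (1 - l • M₀)⁻¹ * M₀, hNnil, ?_, ?_⟩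
  · rw [Matrix.reindex_apply, hPdef, hQdef, km_keyL, km_key]
    have hinner : ((D * Vm) * C) * A * U =
        Matrix.fromBlocks (1 : Matrix (Fin d) (Fin d) ℝ) 0 0 ((1 - l • M₀)⁻¹ * M₀) := by
      rw [Matrix.mul_assoc (D * Vm) C A, ← hMdef, Matrix.mul_assoc D Vm Mm,
        Matrix.mul_assoc D (Vm * Mm) U, hVMU, hGdef, hDdef, Matrix.fromBlocks_multiply]
      simp [Matrix.nonsing_inv_mul _ hdet1]
    rw [hinner, heedef]
  · rw [Matrix.reindex_apply, hPdef, hQdef, km_keyL, km_key]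
    have hVBU : (Vm * (C * B)) * U = Matrix.fromBlocks (1 - l • M₁) 0 0 (1 - l • M₀) := by
      rw [hCB, Matrix.mul_sub, Matrix.mul_smul, Matrix.mul_one, Matrix.sub_mul,
        Matrix.smul_mul, hVU, hVMU]
      ext (i | i) (j | j) <;>
        simp [hGdef, Matrix.sub_apply, Matrix.smul_apply, Matrix.one_apply]
    have hinner : ((D * Vm) * C) * B * U =
        Matrix.fromBlocks (M₁⁻¹ * (1 - l • M₁)) 0 0 (1 : Matrix (Fin q) (Fin q) ℝ) := by
      rw [Matrix.mul_assoc (D * Vm) C B, Matrix.mul_assoc D Vm (C * B),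
        Matrix.mul_assoc D (Vm * (C * B)) U, hVBU, hDdef, Matrix.fromBlocks_multiply]
      simp [Matrix.nonsing_inv_mul _ hdet2]
    rw [hinner, heedef]
end

section
/- Let N be a nilpotent q×q real matrix and let c be a q-tuple of distributions on (0,∞). Then the q-tuple v of distributions defined by ⟨v,φ⟩ = Σ_{k=0}^{q−1} N^k·⟨c,φ^{(k)}⟩ (for every test function φ, where φ^{(k)} is the k-th derivative) is a solution of N·v̇ + v = c, and it is the unique q-tuple of distributions solving this system (no additional initial condition is needed). In particular, when N is the q×q upper-shift matrix (ones on the superdiagonal, zeros elsewhere), the solution is ⟨v_j,φ⟩ = Σ_{k=j}^{q} ⟨c_k, φ^{(k−j)}⟩ for j = 1,…,q. -/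
open MeasureTheory Function
open scoped ContDiff

/-- A test function on `(0,∞)`: smooth, compactly supported, with support in `(0,∞)`. -/
def IsTestFunction (φ : ℝ → ℝ) : Prop :=
  ContDiff ℝ ∞ φ ∧ HasCompactSupport φ ∧ tsupport φ ⊆ Set.Ioi (0 : ℝ)

/-- The space of test functions on `(0,∞)`, as a submodule of `ℝ → ℝ`. -/
def TestFun : Submodule ℝ (ℝ → ℝ) where
  carrier := {φ | IsTestFunction φ}
  add_mem' := by
    rintro f g ⟨hf1, hf2, hf3⟩ ⟨hg1, hg2, hg3⟩
    refine ⟨hf1.add hg1, hf2.add hg2, ?_⟩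
    calc tsupport (f + g) ⊆ closure (support f ∪ support g) :=
          closure_mono (support_add f g)
      _ = tsupport f ∪ tsupport g := closure_union ..
      _ ⊆ Set.Ioi 0 := Set.union_subset hf3 hg3
  zero_mem' := by
    refine ⟨contDiff_const, ?_, ?_⟩
    · simpa [HasCompactSupport, tsupport, Function.support] using isCompact_empty
    · simp [tsupport, Function.support]
  smul_mem' := by
    rintro c f ⟨hf1, hf2, hf3⟩
    refine ⟨hf1.const_smul c, hf2.mono' ((support_const_smul_subset c f).trans subset_closure), ?_⟩
    exact subset_trans (closure_mono (support_const_smul_subset c f)) hf3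

/-- A distribution on `(0,∞)`: a linear functional on test functions. -/
abbrev Distribution' : Type := TestFun →ₗ[ℝ] ℝ

lemma IsTestFunction.deriv {φ : ℝ → ℝ} (h : IsTestFunction φ) : IsTestFunction (_root_.deriv φ) := by
  obtain ⟨h1, h2, h3⟩ := h
  refine ⟨(contDiff_infty_iff_deriv.mp h1).2, h2.deriv, ?_⟩
  exact subset_trans (closure_minimal support_deriv_subset (isClosed_tsupport φ)) h3

/-- Derivative of a test function, as a test function. -/
noncomputable def tderiv (φ : TestFun) : TestFun := ⟨_root_.deriv φ.1, φ.2.deriv⟩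

/-- `v` solves the purely algebraic system `N v̇ + v = c` in the distributional sense. -/
def SolvesAlg {q : ℕ} (N : Matrix (Fin q) (Fin q) ℝ) (c v : Fin q → Distribution') : Prop :=
  ∀ φ : TestFun,
    N.mulVec (fun i => -(v i (tderiv φ))) + (fun i => v i φ) = fun i => c i φ

lemma nilp_pow_card {q : ℕ} {N : Matrix (Fin q) (Fin q) ℝ} (hN : IsNilpotent N) :
    N ^ q = 0 := by
  have h1 : N.charpoly = Polynomial.X ^ q := by
    have h := (Matrix.isNilpotent_charpoly_sub_pow_of_isNilpotent hN).eq_zero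
    rw [sub_eq_zero] at h
    simpa using h
  have h2 := N.aeval_self_charpoly
  rw [h1] at h2
  simpa using h2

/-- `tderiv` as a linear map. -/
noncomputable def tderivL : TestFun →ₗ[ℝ] TestFun where
  toFun := tderiv
  map_add' φ ψ := by
    apply Subtype.ext
    funext x
    have hφ : Differentiable ℝ (φ : ℝ → ℝ) := (contDiff_infty_iff_deriv.mp φ.2.1).1
    have hψ : Differentiable ℝ (ψ : ℝ → ℝ) := (contDiff_infty_iff_deriv.mp ψ.2.1).1
    exact deriv_add (hφ x) (hψ x)
  map_smul' r φ := by
    apply Subtype.ext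
    funext x
    have hφ : Differentiable ℝ (φ : ℝ → ℝ) := (contDiff_infty_iff_deriv.mp φ.2.1).1
    exact deriv_const_smul r (hφ x)

lemma tderivL_coe : ⇑tderivL = tderiv := rfl

/-- The explicit solution tuple, as distributions. -/
noncomputable def vsolAux {q : ℕ} (N : Matrix (Fin q) (Fin q) ℝ) (c : Fin q → Distribution') :
    Fin q → Distribution' :=
  fun i => ∑ k ∈ Finset.range q, ∑ j, ((N ^ k) i j) • ((c j).comp (tderivL ^ k))

lemma vsolAux_apply {q : ℕ} (N : Matrix (Fin q) (Fin q) ℝ) (c : Fin q → Distribution')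
    (i : Fin q) (φ : TestFun) :
    vsolAux N c i φ = ∑ k ∈ Finset.range q, ((N ^ k).mulVec (fun j => c j (tderiv^[k] φ))) i := by
  simp [vsolAux, Matrix.mulVec, dotProduct, Module.End.pow_apply, tderivL_coe,
    smul_eq_mul]

lemma mulVec_finsum {q : ℕ} (N : Matrix (Fin q) (Fin q) ℝ) (s : Finset ℕ) (f : ℕ → Fin q → ℝ) :
    N.mulVec (∑ k ∈ s, f k) = ∑ k ∈ s, N.mulVec (f k) := by
  classical
  induction s using Finset.induction with
  | empty => simp [Matrix.mulVec_zero]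
  | insert _ _ h ih => rw [Finset.sum_insert h, Finset.sum_insert h, Matrix.mulVec_add, ih]

lemma shift_pow {q : ℕ} (k : ℕ) (i j : Fin q) :
    ((Matrix.of fun i j : Fin q => if (i : ℕ) + 1 = (j : ℕ) then (1 : ℝ) else 0) ^ k) i j
      = if (i : ℕ) + k = (j : ℕ) then 1 else 0 := by
  induction k generalizing j with
  | zero => simp [Matrix.one_apply, Fin.ext_iff]
  | succ k ih =>
    rw [pow_succ, Matrix.mul_apply]
    simp only [ih, Matrix.of_apply]
    by_cases h : (i : ℕ) + (k + 1) = (j : ℕ)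
    · rw [if_pos h]
      have hl : (i : ℕ) + k < q := by omega
      rw [Finset.sum_eq_single (⟨(i : ℕ) + k, hl⟩ : Fin q)]
      · rw [if_pos rfl, one_mul, if_pos (by simpa using by omega)]
      · intro b _ hb
        rw [if_neg (fun hc => hb (Fin.ext hc.symm)), zero_mul]
      · simp
    · rw [if_neg h]
      apply Finset.sum_eq_zero
      intro b _
      by_cases hb : (i : ℕ) + k = (b : ℕ)
      · rw [if_pos hb, one_mul, if_neg (by omega)]
      · rw [if_neg hb, zero_mul]

/-- For nilpotent `N`, the system `N v̇ + v = c` has the tuple given by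
`⟨v,φ⟩ = ∑ₖ Nᵏ ⟨c, φ⁽ᵏ⁾⟩` as its unique distributional solution (no initial condition is
needed); in particular for the upper-shift matrix the solution is
`⟨v_j, φ⟩ = ∑_{k ≥ j} ⟨c_k, φ⁽ᵏ⁻ʲ⁾⟩`. -/
theorem algebraic_part_unique_solution {q : ℕ} (N : Matrix (Fin q) (Fin q) ℝ)
    (hN : IsNilpotent N) (c : Fin q → Distribution') :
    (∀ v : Fin q → Distribution',
      (∀ (φ : TestFun) (i : Fin q),
        v i φ = ∑ k ∈ Finset.range q, ((N ^ k).mulVec (fun j => c j (tderiv^[k] φ))) i) →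
      SolvesAlg N c v) ∧
    (∃! v : Fin q → Distribution', SolvesAlg N c v) ∧
    (∀ v : Fin q → Distribution', SolvesAlg N c v →
      ∀ (φ : TestFun) (i : Fin q),
        v i φ = ∑ k ∈ Finset.range q, ((N ^ k).mulVec (fun j => c j (tderiv^[k] φ))) i) ∧
    ((N = Matrix.of fun i j : Fin q => if (i : ℕ) + 1 = (j : ℕ) then (1 : ℝ) else 0) →
      ∀ v : Fin q → Distribution', SolvesAlg N c v →
      ∀ (φ : TestFun) (i : Fin q),
        v i φ = ∑ k : Fin q, if i ≤ k then c k (tderiv^[(k : ℕ) - (i : ℕ)] φ) else 0) := by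
  have hNq : N ^ q = 0 := nilp_pow_card hN
  -- the formula satisfied by the candidate solution
  have hsolves : ∀ v : Fin q → Distribution',
      (∀ (φ : TestFun) (i : Fin q),
        v i φ = ∑ k ∈ Finset.range q, ((N ^ k).mulVec (fun j => c j (tderiv^[k] φ))) i) →
      SolvesAlg N c v := by
    intro v hv φ
    set g : ℕ → Fin q → ℝ := fun k => (N ^ k).mulVec (fun j => c j (tderiv^[k] φ)) with hg
    have h1 : (fun i => v i φ) = ∑ k ∈ Finset.range q, g k := by
      funext i
      rw [hv φ i, Finset.sum_apply]
    have h2 : (fun i => -(v i (tderiv φ)))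
        = -∑ k ∈ Finset.range q, (N ^ k).mulVec (fun j => c j (tderiv^[k + 1] φ)) := by
      funext i
      simp only [Pi.neg_apply, Finset.sum_apply, hv (tderiv φ) i, neg_inj,
        Function.iterate_succ_apply]
    have h3 : N.mulVec (fun i => -(v i (tderiv φ))) = -∑ k ∈ Finset.range q, g (k + 1) := by
      rw [h2, Matrix.mulVec_neg, mulVec_finsum, neg_inj]
      refine Finset.sum_congr rfl fun k _ => ?_
      rw [hg]
      rw [Matrix.mulVec_mulVec, ← pow_succ']
    rw [h1, h3]
    have tele : ∑ k ∈ Finset.range q, (g k - g (k + 1)) = g 0 - g q :=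
      Finset.sum_range_sub' g q
    rw [Finset.sum_sub_distrib] at tele
    have hg0 : g 0 = fun i => c i φ := by
      simp [hg, Matrix.one_mulVec]
    have hgq : g q = 0 := by
      simp [hg, hNq, Matrix.zero_mulVec]
    calc -∑ k ∈ Finset.range q, g (k + 1) + ∑ k ∈ Finset.range q, g k
        = ∑ k ∈ Finset.range q, g k - ∑ k ∈ Finset.range q, g (k + 1) := by abel
      _ = g 0 - g q := tele
      _ = fun i => c i φ := by rw [hg0, hgq, sub_zero]
  -- any solution satisfies the formula
  have huniq : ∀ v : Fin q → Distribution', SolvesAlg N c v →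
      ∀ (φ : TestFun) (i : Fin q),
        v i φ = ∑ k ∈ Finset.range q, ((N ^ k).mulVec (fun j => c j (tderiv^[k] φ))) i := by
    intro v hv
    have hrec : ∀ φ : TestFun, (fun i => v i φ)
        = (fun i => c i φ) + N.mulVec (fun i => v i (tderiv φ)) := by
      intro φ
      have h := hv φ
      have h2 : -N.mulVec (fun i => v i (tderiv φ)) + (fun i => v i φ) = fun i => c i φ := by
        rw [← h]
        congr 1
        rw [← Matrix.mulVec_neg]
        rfl
      rw [← h2]
      abel
    have key : ∀ (m : ℕ) (φ : TestFun), (fun i => v i φ)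
        = (∑ k ∈ Finset.range m, (N ^ k).mulVec (fun j => c j (tderiv^[k] φ)))
          + (N ^ m).mulVec (fun j => v j (tderiv^[m] φ)) := by
      intro m
      induction m with
      | zero => intro φ; simp [Matrix.one_mulVec]
      | succ m ih =>
        intro φ
        rw [ih φ, hrec (tderiv^[m] φ)]
        rw [Matrix.mulVec_add, Matrix.mulVec_mulVec, ← pow_succ,
          Finset.sum_range_succ, add_assoc]
        congr 2
        · funext i
          simp [Function.iterate_succ_apply']
    intro φ i
    have h := key q φ
    rw [hNq, Matrix.zero_mulVec, add_zero] at h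
    calc v i φ = (∑ k ∈ Finset.range q, (N ^ k).mulVec (fun j => c j (tderiv^[k] φ))) i := by
          rw [← h]
      _ = _ := Finset.sum_apply i _ _
  refine ⟨hsolves, ⟨vsolAux N c, hsolves _ (fun φ i => vsolAux_apply N c i φ), ?_⟩, huniq, ?_⟩
  · intro v hv
    funext i
    apply LinearMap.ext
    intro φ
    rw [huniq v hv φ i, vsolAux_apply]
  · intro hNshift v hv φ i
    rw [huniq v hv φ i]
    -- extend c to ℕ
    set c' : ℕ → Distribution' := fun m => if h : m < q then c ⟨m, h⟩ else 0 with hc'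
    have hL : ∀ k ∈ Finset.range q,
        ((N ^ k).mulVec (fun j => c j (tderiv^[k] φ))) i
          = if (i : ℕ) + k < q then (c' ((i : ℕ) + k)) (tderiv^[k] φ) else 0 := by
      intro k _
      rw [Matrix.mulVec, dotProduct]
      simp only [hNshift, shift_pow]
      by_cases h : (i : ℕ) + k < q
      · rw [if_pos h]
        rw [Finset.sum_eq_single (⟨(i : ℕ) + k, h⟩ : Fin q)]
        · rw [if_pos rfl, one_mul]
          have hcc : c' ((i : ℕ) + k) = c ⟨(i : ℕ) + k, h⟩ := dif_pos h
          rw [hcc]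
        · intro b _ hb
          rw [if_neg (fun hc => hb (Fin.ext hc.symm)), zero_mul]
        · simp
      · rw [if_neg h]
        apply Finset.sum_eq_zero
        intro b _
        rw [if_neg (by omega), zero_mul]
    rw [Finset.sum_congr rfl hL]
    have hR : ∑ k : Fin q, (if i ≤ k then c k (tderiv^[(k : ℕ) - (i : ℕ)] φ) else 0)
        = ∑ m ∈ Finset.range q,
            (if (i : ℕ) ≤ m then (c' m) (tderiv^[m - (i : ℕ)] φ) else 0) := by
      rw [← Fin.sum_univ_eq_sum_range (fun m => if (i : ℕ) ≤ m then (c' m) (tderiv^[m - (i : ℕ)] φ) else 0) q]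
      refine Finset.sum_congr rfl fun k _ => ?_
      have hk : c' (k : ℕ) = c k := by simp only [hc']; rw [dif_pos k.isLt]
      simp only [hk, Fin.le_def]
    rw [hR]
    rw [← Finset.sum_filter, ← Finset.sum_filter]
    apply Finset.sum_nbij' (fun k => (i : ℕ) + k) (fun m => m - (i : ℕ))
    · intro k hk
      simp only [Finset.mem_filter, Finset.mem_range] at hk ⊢
      omega
    · intro m hm
      simp only [Finset.mem_filter, Finset.mem_range] at hm ⊢
      omega
    · intro k hk
      simp only [Finset.mem_filter, Finset.mem_range] at hk
      omega
    · intro m hm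
      simp only [Finset.mem_filter, Finset.mem_range] at hm
      omega
    · intro k hk
      simp only [Finset.mem_filter, Finset.mem_range] at hk
      rw [show (i : ℕ) + k - (i : ℕ) = k from by omega]
end

section
/- Let J be a d×d real matrix, b a d-tuple of distributions on (0,∞), u⁰ ∈ ℝ^d, and let φ₀ be a test function with ∫₀^∞ φ₀(t)dt = 1 such that the d×d matrix M = ∫₀^∞ e^{−Jt}·φ₀(t) dt is invertible. Then there exists a unique d-tuple u of distributions on (0,∞) satisfying u̇ + J·u = b and ⟨u,φ₀⟩ = u⁰. -/
open MeasureTheory Function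
open scoped ContDiff

/-- `u` solves the linear differential system `u̇ + J u = b` in the distributional sense. -/
def SolvesODE {d : ℕ} (J : Matrix (Fin d) (Fin d) ℝ) (b u : Fin d → Distribution') : Prop :=
  ∀ φ : TestFun,
    (fun i => -(u i (tderiv φ))) + J.mulVec (fun i => u i φ) = fun i => b i φ


open NormedSpace
open scoped Matrix
open scoped ContDiff

variable {d : ℕ}

noncomputable def mexp (A : Matrix (Fin d) (Fin d) ℝ) (t : ℝ) : Matrix (Fin d) (Fin d) ℝ :=
  NormedSpace.exp (t • A)

lemma mexp_entry_hasDerivAt (A : Matrix (Fin d) (Fin d) ℝ) (t : ℝ) (i j : Fin d) :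
    HasDerivAt (fun s => mexp A s i j) ((A * mexp A t) i j) t := by
  letI : SeminormedRing (Matrix (Fin d) (Fin d) ℝ) := Matrix.linftyOpSemiNormedRing
  letI : NormedRing (Matrix (Fin d) (Fin d) ℝ) := Matrix.linftyOpNormedRing
  letI : NormedAlgebra ℝ (Matrix (Fin d) (Fin d) ℝ) := Matrix.linftyOpNormedAlgebra
  have h := hasDerivAt_exp_smul_const' (𝕂 := ℝ) A t
  let L : Matrix (Fin d) (Fin d) ℝ →ₗ[ℝ] ℝ :=
    { toFun := fun M => M i j, map_add' := fun _ _ => rfl, map_smul' := fun _ _ => rfl }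
  exact (L.toContinuousLinearMap.hasFDerivAt.comp_hasDerivAt t h)

lemma mexp_entry_contDiff (A : Matrix (Fin d) (Fin d) ℝ) (i j : Fin d) :
    ContDiff ℝ ∞ (fun t => mexp A t i j) := by
  letI : SeminormedRing (Matrix (Fin d) (Fin d) ℝ) := Matrix.linftyOpSemiNormedRing
  letI : NormedRing (Matrix (Fin d) (Fin d) ℝ) := Matrix.linftyOpNormedRing
  letI : NormedAlgebra ℝ (Matrix (Fin d) (Fin d) ℝ) := Matrix.linftyOpNormedAlgebra
  have key : ∀ n : ℕ, ∀ C : Matrix (Fin d) (Fin d) ℝ,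
      ContDiff ℝ (n : WithTop ℕ∞) (fun t : ℝ => C * NormedSpace.exp (t • A)) := by
    intro n
    induction n with
    | zero =>
      intro C
      rw [show ((0 : ℕ) : WithTop ℕ∞) = 0 from rfl, contDiff_zero]
      exact continuous_const.mul (continuous_iff_continuousAt.2 fun s => (hasDerivAt_exp_smul_const' (𝕂 := ℝ) A s).continuousAt)
    | succ n ih =>
      intro C
      have hdiff : ∀ s : ℝ, HasDerivAt (fun t : ℝ => C * NormedSpace.exp (t • A))
          ((C * A) * NormedSpace.exp (s • A)) s := by
        intro s
        have := (hasDerivAt_exp_smul_const' (𝕂 := ℝ) A s).const_mul C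
        rw [mul_assoc]; exact this
      rw [show ((n + 1 : ℕ) : WithTop ℕ∞) = (n : WithTop ℕ∞) + 1 by push_cast; ring,
        contDiff_succ_iff_deriv]
      refine ⟨fun s => (hdiff s).differentiableAt, by simp, ?_⟩
      have : deriv (fun t : ℝ => C * NormedSpace.exp (t • A))
          = fun s => (C * A) * NormedSpace.exp (s • A) := funext fun s => (hdiff s).deriv
      erw [this]
      exact ih (C * A)
  rw [contDiff_infty]
  intro n
  let L : Matrix (Fin d) (Fin d) ℝ →ₗ[ℝ] ℝ :=
    { toFun := fun M => M i j, map_add' := fun _ _ => rfl, map_smul' := fun _ _ => rfl }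
  have := (L.toContinuousLinearMap.contDiff (n := (n : WithTop ℕ∞))).comp (key n 1)
  simp only [one_mul] at this; exact this

lemma mexp_mul_neg (A : Matrix (Fin d) (Fin d) ℝ) (t : ℝ) :
    mexp A t * mexp (-A) t = 1 := by
  have h : Commute (t • A) (-(t • A)) := Commute.neg_right (Commute.refl _)
  have := Matrix.exp_add_of_commute (t • A) (-(t • A)) h
  rw [add_neg_cancel, NormedSpace.exp_zero] at this
  rw [mexp, mexp, smul_neg, ← this]

lemma mexp_transpose (A : Matrix (Fin d) (Fin d) ℝ) (t : ℝ) :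
    mexp (-Aᵀ) t = (NormedSpace.exp (-(t • A)))ᵀ := by
  rw [mexp, ← Matrix.exp_transpose]
  congr 1
  simp [Matrix.transpose_smul]

lemma primitive_hasDerivAt {f : ℝ → ℝ} (hf : Continuous f) (t : ℝ) :
    HasDerivAt (fun u => ∫ s in (0:ℝ)..u, f s) (f t) t :=
  (hf.integral_hasStrictDerivAt 0 t).hasDerivAt

lemma primitive_contDiff {f : ℝ → ℝ} (hf : ContDiff ℝ ∞ f) :
    ContDiff ℝ ∞ (fun t => ∫ s in (0:ℝ)..t, f s) := by
  rw [contDiff_infty_iff_deriv]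
  have hc := hf.continuous
  refine ⟨fun t => (primitive_hasDerivAt hc t).differentiableAt, ?_⟩
  have : deriv (fun t => ∫ s in (0:ℝ)..t, f s) = f := funext fun t => (primitive_hasDerivAt hc t).deriv
  rw [this]; exact hf


namespace ODEAux

variable {d : ℕ} (J : Matrix (Fin d) (Fin d) ℝ)

/-- The integrand `e^{-tJᵀ} Φ(t)`, componentwise. -/
noncomputable def Fv (Φ : Fin d → TestFun) (t : ℝ) (j : Fin d) : ℝ :=
  ∑ k, mexp (-Jᵀ) t j k * (Φ k).1 t

/-- Primitive of `Fv` from `0`. -/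
noncomputable def Kv (Φ : Fin d → TestFun) (t : ℝ) (j : Fin d) : ℝ :=
  ∫ s in (0:ℝ)..t, Fv J Φ s j

/-- Total integral of `Fv` over `(0,∞)`. -/
noncomputable def wv (Φ : Fin d → TestFun) (j : Fin d) : ℝ :=
  ∫ t in Set.Ioi (0:ℝ), Fv J Φ t j

/-- The candidate primitive `−e^{tJᵀ} ∫₀ᵗ e^{−sJᵀ} Φ(s) ds`. -/
noncomputable def Pv (Φ : Fin d → TestFun) (t : ℝ) (i : Fin d) : ℝ :=
  -∑ j, mexp Jᵀ t i j * Kv J Φ t j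

lemma Fv_contDiff (Φ : Fin d → TestFun) (j : Fin d) :
    ContDiff ℝ ∞ (fun t => Fv J Φ t j) := by
  exact ContDiff.sum fun k _ => (mexp_entry_contDiff _ j k).mul (Φ k).2.1

lemma Fv_continuous (Φ : Fin d → TestFun) (j : Fin d) :
    Continuous (fun t => Fv J Φ t j) := (Fv_contDiff J Φ j).continuous

lemma Fv_eq_zero (Φ : Fin d → TestFun) {t : ℝ} (h : ∀ k, (Φ k).1 t = 0) (j : Fin d) :
    Fv J Φ t j = 0 := by
  simp only [Fv]
  exact Finset.sum_eq_zero fun k _ => by rw [h k, mul_zero]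

lemma Fv_hasCompactSupport (Φ : Fin d → TestFun) (j : Fin d) :
    HasCompactSupport (fun t => Fv J Φ t j) := by
  refine HasCompactSupport.intro (K := ⋃ k, tsupport (Φ k).1)
    (isCompact_iUnion fun k => (Φ k).2.2.1) fun t ht => ?_
  refine Fv_eq_zero J Φ (fun k => ?_) j
  exact image_eq_zero_of_notMem_tsupport fun hk => ht (Set.mem_iUnion.2 ⟨k, hk⟩)

lemma Fv_integrable (Φ : Fin d → TestFun) (j : Fin d) :
    Integrable (fun t => Fv J Φ t j) :=
  (Fv_continuous J Φ j).integrable_of_hasCompactSupport (Fv_hasCompactSupport J Φ j)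

lemma Kv_hasDerivAt (Φ : Fin d → TestFun) (t : ℝ) (j : Fin d) :
    HasDerivAt (fun u => Kv J Φ u j) (Fv J Φ t j) t :=
  primitive_hasDerivAt (Fv_continuous J Φ j) t

lemma Kv_contDiff (Φ : Fin d → TestFun) (j : Fin d) :
    ContDiff ℝ ∞ (fun t => Kv J Φ t j) :=
  primitive_contDiff (Fv_contDiff J Φ j)

lemma Pv_contDiff (Φ : Fin d → TestFun) (i : Fin d) :
    ContDiff ℝ ∞ (fun t => Pv J Φ t i) := by
  exact (ContDiff.sum fun j _ => (mexp_entry_contDiff _ i j).mul (Kv_contDiff J Φ j)).neg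

/-- Key sum manipulation: `e^{tA} ⬝ (e^{-tA} ⬝ v) = v`. -/
lemma sum_mexp_Fv (Φ : Fin d → TestFun) (t : ℝ) (i : Fin d) :
    ∑ j, mexp Jᵀ t i j * Fv J Φ t j = (Φ i).1 t := by
  have h1 : ∑ j, mexp Jᵀ t i j * Fv J Φ t j
      = ∑ k, (mexp Jᵀ t * mexp (-Jᵀ) t) i k * (Φ k).1 t := by
    simp only [Fv, Finset.mul_sum, Matrix.mul_apply, Finset.sum_mul]
    rw [Finset.sum_comm]
    exact Finset.sum_congr rfl fun k _ => Finset.sum_congr rfl fun j _ => by ring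
  rw [h1, mexp_mul_neg]
  simp [Matrix.one_apply]

lemma Pv_hasDerivAt (Φ : Fin d → TestFun) (t : ℝ) (i : Fin d) :
    HasDerivAt (fun u => Pv J Φ u i)
      (∑ k, Jᵀ i k * Pv J Φ t k - (Φ i).1 t) t := by
  have h : HasDerivAt (fun u => ∑ j, mexp Jᵀ u i j * Kv J Φ u j)
      (∑ j, ((Jᵀ * mexp Jᵀ t) i j * Kv J Φ t j + mexp Jᵀ t i j * Fv J Φ t j)) t :=
    HasDerivAt.fun_sum fun j _ => (mexp_entry_hasDerivAt Jᵀ t i j).mul (Kv_hasDerivAt J Φ t j)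
  have heq : -(∑ j, ((Jᵀ * mexp Jᵀ t) i j * Kv J Φ t j + mexp Jᵀ t i j * Fv J Φ t j))
      = ∑ k, Jᵀ i k * Pv J Φ t k - (Φ i).1 t := by
    rw [Finset.sum_add_distrib, sum_mexp_Fv]
    have h2 : ∑ j, (Jᵀ * mexp Jᵀ t) i j * Kv J Φ t j = -∑ k, Jᵀ i k * Pv J Φ t k := by
      simp only [Matrix.mul_apply, Finset.sum_mul, Pv, mul_neg, Finset.sum_neg_distrib,
        neg_neg, Finset.mul_sum]
      rw [Finset.sum_comm]
      exact Finset.sum_congr rfl fun k _ => Finset.sum_congr rfl fun j _ => by ring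
    rw [h2]; ring
  simpa [Pv, heq] using h.fun_neg

lemma Kv_eq_zero_of_lt (Φ : Fin d → TestFun) {a t : ℝ} (ha : 0 < a)
    (hsupp : ∀ k, tsupport (Φ k).1 ⊆ Set.Ici a) (ht : t < a) (j : Fin d) :
    Kv J Φ t j = 0 := by
  have hz : Set.EqOn (fun s => Fv J Φ s j) (fun _ => (0:ℝ)) (Set.uIcc (0:ℝ) t) := by
    intro s hs
    refine Fv_eq_zero J Φ (fun k => image_eq_zero_of_notMem_tsupport fun hk => ?_) j
    have h1 : a ≤ s := hsupp k hk
    rcases Set.mem_uIcc.1 hs with ⟨_, h2⟩ | ⟨_, h2⟩ <;> linarith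
  rw [Kv, intervalIntegral.integral_congr hz]
  simp

lemma Kv_eq_wv_of_ge (Φ : Fin d → TestFun) {b t : ℝ} (hb : 0 < b)
    (hsupp : ∀ k, tsupport (Φ k).1 ⊆ Set.Iic b) (ht : b ≤ t) (j : Fin d) :
    Kv J Φ t j = wv J Φ j := by
  have h0t : (0:ℝ) ≤ t := (hb.trans_le ht).le
  have hint := Fv_integrable J Φ j
  have htail : ∫ s in Set.Ioi t, Fv J Φ s j = 0 := by
    refine setIntegral_eq_zero_of_forall_eq_zero fun s hs => ?_
    refine Fv_eq_zero J Φ (fun k => image_eq_zero_of_notMem_tsupport fun hk => ?_) j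
    have h1 : s ≤ b := hsupp k hk
    have h2 : t < s := Set.mem_Ioi.1 hs
    linarith
  have hsplit : wv J Φ j = (∫ s in Set.Ioc 0 t, Fv J Φ s j) + ∫ s in Set.Ioi t, Fv J Φ s j := by
    rw [wv, ← Set.Ioc_union_Ioi_eq_Ioi h0t]
    exact setIntegral_union (Set.Ioc_disjoint_Ioi le_rfl) measurableSet_Ioi
      hint.integrableOn hint.integrableOn
  rw [Kv, intervalIntegral.integral_of_le h0t, hsplit, htail, add_zero]

lemma Pv_eq_zero_of_notmem (Φ : Fin d → TestFun) {a b : ℝ} (ha : 0 < a)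
    (hsupp : ∀ k, tsupport (Φ k).1 ⊆ Set.Icc a b)
    (hw : ∀ j, wv J Φ j = 0) {t : ℝ} (ht : t ∉ Set.Icc a b) (i : Fin d) :
    Pv J Φ t i = 0 := by
  by_cases hab : a ≤ b
  · have hz : ∀ j, Kv J Φ t j = 0 := by
      intro j
      rcases lt_or_ge t a with h | h
      · exact Kv_eq_zero_of_lt J Φ ha (fun k => (hsupp k).trans fun x hx => hx.1) h j
      · have hbt : b ≤ t := by
          by_contra hc
          exact ht ⟨h, not_lt.1 fun h2 => hc h2.le⟩
        rw [Kv_eq_wv_of_ge J Φ (ha.trans_le hab) (fun k => (hsupp k).trans fun x hx => hx.2)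
          hbt j, hw j]
    simp [Pv, hz]
  · have hz : ∀ j, Kv J Φ t j = 0 := by
      intro j
      rw [Kv]
      have : ∀ s, Fv J Φ s j = 0 := by
        intro s
        refine Fv_eq_zero J Φ (fun k => image_eq_zero_of_notMem_tsupport fun hk => ?_) j
        have := hsupp k hk
        exact hab (this.1.trans this.2)
      simp [this]
    simp [Pv, hz]

lemma Pv_isTestFunction (Φ : Fin d → TestFun) {a b : ℝ} (ha : 0 < a)
    (hsupp : ∀ k, tsupport (Φ k).1 ⊆ Set.Icc a b)
    (hw : ∀ j, wv J Φ j = 0) (i : Fin d) :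
    IsTestFunction fun t => Pv J Φ t i := by
  have hzero : ∀ t ∉ Set.Icc a b, Pv J Φ t i = 0 := fun t ht =>
    Pv_eq_zero_of_notmem J Φ ha hsupp hw ht i
  refine ⟨Pv_contDiff J Φ i, HasCompactSupport.intro isCompact_Icc hzero, ?_⟩
  have hsub : support (fun t => Pv J Φ t i) ⊆ Set.Icc a b := fun t ht => by
    by_contra hc; exact ht (hzero t hc)
  exact (closure_minimal hsub isClosed_Icc).trans fun x hx => ha.trans_le hx.1

lemma Fv_add (Φ Ψ : Fin d → TestFun) (t : ℝ) (j : Fin d) :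
    Fv J (Φ + Ψ) t j = Fv J Φ t j + Fv J Ψ t j := by
  simp [Fv, mul_add, Finset.sum_add_distrib]

lemma Fv_smul (r : ℝ) (Φ : Fin d → TestFun) (t : ℝ) (j : Fin d) :
    Fv J (r • Φ) t j = r * Fv J Φ t j := by
  simp only [Fv, Finset.mul_sum, Pi.smul_apply, SetLike.val_smul, smul_eq_mul]
  exact Finset.sum_congr rfl fun k _ => by ring

lemma Kv_add (Φ Ψ : Fin d → TestFun) (t : ℝ) (j : Fin d) :
    Kv J (Φ + Ψ) t j = Kv J Φ t j + Kv J Ψ t j := by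
  simp only [Kv, Fv_add]
  exact intervalIntegral.integral_add ((Fv_continuous J Φ j).intervalIntegrable _ _)
    ((Fv_continuous J Ψ j).intervalIntegrable _ _)

lemma Kv_smul (r : ℝ) (Φ : Fin d → TestFun) (t : ℝ) (j : Fin d) :
    Kv J (r • Φ) t j = r * Kv J Φ t j := by
  simp only [Kv, Fv_smul]
  exact intervalIntegral.integral_const_mul r _

lemma wv_add (Φ Ψ : Fin d → TestFun) (j : Fin d) :
    wv J (Φ + Ψ) j = wv J Φ j + wv J Ψ j := by
  simp only [wv, Fv_add]
  exact integral_add (Fv_integrable J Φ j).integrableOn (Fv_integrable J Ψ j).integrableOn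

lemma wv_smul (r : ℝ) (Φ : Fin d → TestFun) (j : Fin d) :
    wv J (r • Φ) j = r * wv J Φ j := by
  simp only [wv, Fv_smul]
  exact integral_const_mul r _

lemma Pv_add (Φ Ψ : Fin d → TestFun) (t : ℝ) (i : Fin d) :
    Pv J (Φ + Ψ) t i = Pv J Φ t i + Pv J Ψ t i := by
  simp [Pv, Kv_add, mul_add, Finset.sum_add_distrib]
  ring

lemma Pv_smul (r : ℝ) (Φ : Fin d → TestFun) (t : ℝ) (i : Fin d) :
    Pv J (r • Φ) t i = r * Pv J Φ t i := by
  simp only [Pv, Kv_smul, Finset.mul_sum, neg_mul, mul_neg, neg_inj]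
  exact Finset.sum_congr rfl fun k _ => by ring

lemma commute_mexp {X Y : Matrix (Fin d) (Fin d) ℝ} (h : Commute X Y) (t : ℝ) :
    X * mexp Y t = mexp Y t * X :=
  ((h.smul_right t).exp_right)

lemma mexp_neg_transpose_entry (t : ℝ) (j i : Fin d) :
    mexp (-Jᵀ) t j i = NormedSpace.exp (-(t • J)) i j := by
  rw [mexp_transpose]
  rfl

lemma integrable_mexp_mul (X : Matrix (Fin d) (Fin d) ℝ) (ψ : TestFun) (j k : Fin d) :
    Integrable (fun t => mexp X t j k * ψ.1 t) := by
  refine Continuous.integrable_of_hasCompactSupport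
    ((mexp_entry_contDiff X j k).continuous.mul ψ.2.1.continuous) ?_
  exact HasCompactSupport.intro ψ.2.2.1 fun t ht => by
    rw [image_eq_zero_of_notMem_tsupport ht, mul_zero]

lemma Fv_single (ψ : TestFun) (i : Fin d) (t : ℝ) (j : Fin d) :
    Fv J (Pi.single i ψ) t j = mexp (-Jᵀ) t j i * ψ.1 t := by
  rw [Fv, Finset.sum_eq_single i]
  · rw [Pi.single_eq_same]
  · intro k _ hk
    rw [Pi.single_eq_of_ne hk, ZeroMemClass.coe_zero, Pi.zero_apply, mul_zero]
  · intro h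
    exact absurd (Finset.mem_univ i) h

lemma testfun_sub_smul_val (ψ χ : TestFun) (r : ℝ) (t : ℝ) :
    ((ψ - r • χ : TestFun) : ℝ → ℝ) t = ψ.1 t - r * χ.1 t := by
  simp

/-- `L* Ψ = -Ψ' + Jᵀ Ψ`, componentwise. -/
noncomputable def Lmap (Ψ : Fin d → TestFun) : Fin d → TestFun :=
  fun j => -(tderiv (Ψ j)) + ∑ i, (J i j) • Ψ i

lemma Lmap_val (Ψ : Fin d → TestFun) (j : Fin d) (t : ℝ) :
    (Lmap J Ψ j).1 t = -(_root_.deriv (Ψ j).1 t) + ∑ i, J i j * (Ψ i).1 t := by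
  simp [Lmap, tderiv, AddSubmonoidClass.coe_finset_sum, Finset.sum_apply]

lemma testfun_hasDerivAt (ψ : TestFun) (t : ℝ) :
    HasDerivAt ψ.1 (_root_.deriv ψ.1 t) t :=
  ((contDiff_infty_iff_deriv.mp ψ.2.1).1 t).hasDerivAt

lemma Fv_hasDerivAt (Ψ : Fin d → TestFun) (t : ℝ) (j : Fin d) :
    HasDerivAt (fun s => Fv J Ψ s j) (-(Fv J (Lmap J Ψ) t j)) t := by
  have h : HasDerivAt (fun s => Fv J Ψ s j)
      (∑ k, (((-Jᵀ) * mexp (-Jᵀ) t) j k * (Ψ k).1 t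
        + mexp (-Jᵀ) t j k * _root_.deriv (Ψ k).1 t)) t :=
    HasDerivAt.fun_sum fun k _ =>
      (mexp_entry_hasDerivAt (-Jᵀ) t j k).mul (testfun_hasDerivAt (Ψ k) t)
  have heq : (∑ k, (((-Jᵀ) * mexp (-Jᵀ) t) j k * (Ψ k).1 t
        + mexp (-Jᵀ) t j k * _root_.deriv (Ψ k).1 t)) = -(Fv J (Lmap J Ψ) t j) := by
    have hcomm : (-Jᵀ) * mexp (-Jᵀ) t = mexp (-Jᵀ) t * (-Jᵀ) :=
      commute_mexp (Commute.refl _) t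
    have aux1 : ∀ (M N : Matrix (Fin d) (Fin d) ℝ) (v : Fin d → ℝ),
        ∑ x, (M * N) j x * v x = ∑ x, M j x * (∑ i, N x i * v i) := by
      intro M N v
      simp only [Matrix.mul_apply, Finset.sum_mul, Finset.mul_sum]
      rw [Finset.sum_comm]
      exact Finset.sum_congr rfl fun x _ => Finset.sum_congr rfl fun k _ => by ring
    simp only [Fv, Lmap_val, hcomm, Finset.sum_add_distrib]
    rw [aux1 (mexp (-Jᵀ) t) (-Jᵀ) (fun i => (Ψ i).1 t)]
    rw [← Finset.sum_add_distrib, ← Finset.sum_neg_distrib]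
    refine Finset.sum_congr rfl fun k _ => ?_
    simp only [Matrix.neg_apply, Matrix.transpose_apply, neg_mul, Finset.sum_neg_distrib]
    ring
  rw [← heq]; exact h

lemma Lmap_val_zero (Ψ : Fin d → TestFun) {t : ℝ} (hz : ∀ i, t ∉ tsupport (Ψ i).1)
    (j : Fin d) : (Lmap J Ψ j).1 t = 0 := by
  rw [Lmap_val]
  have hd : _root_.deriv (Ψ j).1 t = 0 := by
    by_contra h
    exact hz j (support_deriv_subset (by exact h))
  rw [hd, neg_zero, zero_add]
  exact Finset.sum_eq_zero fun i _ => by rw [image_eq_zero_of_notMem_tsupport (hz i), mul_zero]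

lemma Kv_Lmap (Ψ : Fin d → TestFun) {a b : ℝ} (ha : 0 < a)
    (hsupp : ∀ i, tsupport (Ψ i).1 ⊆ Set.Icc a b) (t : ℝ) (j : Fin d) :
    Kv J (Lmap J Ψ) t j = -(Fv J Ψ t j) := by
  have hF : ∀ s ∈ Set.uIcc (0:ℝ) t, HasDerivAt (fun s => -(Fv J Ψ s j))
      (Fv J (Lmap J Ψ) s j) s := fun s _ => by
    simpa using (Fv_hasDerivAt J Ψ s j).fun_neg
  rw [Kv, intervalIntegral.integral_eq_sub_of_hasDerivAt hF
    ((Fv_continuous J (Lmap J Ψ) j).intervalIntegrable _ _)]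
  have h0 : Fv J Ψ 0 j = 0 := by
    refine Fv_eq_zero J Ψ (fun k => image_eq_zero_of_notMem_tsupport fun hk => ?_) j
    have := (hsupp k hk).1
    linarith
  rw [h0]; ring

lemma Lmap_tsupport (Ψ : Fin d → TestFun) {a b : ℝ}
    (hsupp : ∀ i, tsupport (Ψ i).1 ⊆ Set.Icc a b) (j : Fin d) :
    tsupport (Lmap J Ψ j).1 ⊆ Set.Icc a b := by
  refine closure_minimal (fun t ht => ?_) isClosed_Icc
  by_contra hc
  exact ht (Lmap_val_zero J Ψ (fun i hi => hc (hsupp i hi)) j)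

lemma wv_Lmap (Ψ : Fin d → TestFun) {a b : ℝ} (ha : 0 < a)
    (hsupp : ∀ i, tsupport (Ψ i).1 ⊆ Set.Icc a b) (j : Fin d) :
    wv J (Lmap J Ψ) j = 0 := by
  set T : ℝ := max b 1 + 1 with hT
  have hT1 : (0:ℝ) < max b 1 := lt_of_lt_of_le one_pos (le_max_right _ _)
  have hKw : Kv J (Lmap J Ψ) T j = wv J (Lmap J Ψ) j := by
    refine Kv_eq_wv_of_ge J _ hT1 (fun i => (Lmap_tsupport J Ψ hsupp i).trans fun x hx => ?_)
      (by simp [hT]) j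
    exact hx.2.trans (le_max_left _ _)
  rw [← hKw, Kv_Lmap J Ψ ha hsupp]
  have : Fv J Ψ T j = 0 := by
    refine Fv_eq_zero J Ψ (fun k => image_eq_zero_of_notMem_tsupport fun hk => ?_) j
    have h1 := (hsupp k hk).2
    have h2 : b ≤ max b 1 := le_max_left _ _
    simp only [hT] at h1 ⊢
    linarith
  rw [this, neg_zero]

lemma Pv_Lmap (Ψ : Fin d → TestFun) {a b : ℝ} (ha : 0 < a)
    (hsupp : ∀ i, tsupport (Ψ i).1 ⊆ Set.Icc a b) (t : ℝ) (i : Fin d) :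
    Pv J (Lmap J Ψ) t i = (Ψ i).1 t := by
  have h : ∀ j, Kv J (Lmap J Ψ) t j = -(Fv J Ψ t j) := fun j => Kv_Lmap J Ψ ha hsupp t j
  simp only [Pv, h, mul_neg, Finset.sum_neg_distrib, neg_neg]
  exact sum_mexp_Fv J Ψ t i

lemma exists_bounds (φ₀ : TestFun) (Φ : Fin d → TestFun) :
    ∃ a b : ℝ, 0 < a ∧ tsupport φ₀.1 ⊆ Set.Icc a b ∧
      ∀ k, tsupport (Φ k).1 ⊆ Set.Icc a b := by
  set S : Set ℝ := insert (1:ℝ) (tsupport φ₀.1 ∪ ⋃ k, tsupport (Φ k).1) with hS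
  have hcomp : IsCompact S :=
    ((φ₀.2.2.1.union (isCompact_iUnion fun k => (Φ k).2.2.1))).insert 1
  have hsub : S ⊆ Set.Ioi 0 := by
    refine Set.insert_subset (by norm_num) (Set.union_subset φ₀.2.2.2 ?_)
    exact Set.iUnion_subset fun k => (Φ k).2.2.2
  have hmem : ∀ x ∈ S, sInf S ≤ x ∧ x ≤ sSup S := fun x hx =>
    ⟨csInf_le hcomp.bddBelow hx, le_csSup hcomp.bddAbove hx⟩
  refine ⟨sInf S, sSup S, hsub (hcomp.sInf_mem ⟨1, Set.mem_insert _ _⟩), ?_, ?_⟩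
  · intro x hx
    exact hmem x (Set.mem_insert_of_mem _ (Set.mem_union_left _ hx))
  · intro k x hx
    exact hmem x (Set.mem_insert_of_mem _ (Set.mem_union_right _ (Set.mem_iUnion.2 ⟨k, hx⟩)))

section WithPhi

variable (Minv : Matrix (Fin d) (Fin d) ℝ) (φ₀ : TestFun)

/-- The matrix `M = ∫₀^∞ e^{-tJ} φ₀(t) dt`. -/
noncomputable def Mmat : Matrix (Fin d) (Fin d) ℝ :=
  Matrix.of fun i j : Fin d =>
    ∫ t in Set.Ioi (0:ℝ), (NormedSpace.exp (-(t • J))) i j * φ₀.1 t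

lemma Mmat_eq (i j : Fin d) :
    Mmat J φ₀ i j = ∫ t in Set.Ioi (0:ℝ), mexp (-Jᵀ) t j i * φ₀.1 t := by
  simp only [Mmat, Matrix.of_apply, mexp_neg_transpose_entry]

lemma wv_single_phi (i j : Fin d) : wv J (Pi.single i φ₀) j = Mmat J φ₀ i j := by
  simp only [wv, Fv_single, Mmat_eq]

lemma wv_csmul (c : Fin d → ℝ) (j : Fin d) :
    wv J (fun k => c k • φ₀) j = ∑ k, Mmat J φ₀ k j * c k := by
  have hptw : ∀ t, Fv J (fun k => c k • φ₀) t j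
      = ∑ k, c k * (mexp (-Jᵀ) t j k * φ₀.1 t) := by
    intro t
    refine Finset.sum_congr rfl fun k _ => ?_
    simp only [SetLike.val_smul, Pi.smul_apply, smul_eq_mul]
    ring
  rw [wv]
  rw [setIntegral_congr_fun measurableSet_Ioi (fun t _ => hptw t)]
  rw [integral_finset_sum _ fun k _ =>
    ((integrable_mexp_mul (-Jᵀ) φ₀ j k).const_mul (c k)).integrableOn]
  refine Finset.sum_congr rfl fun k _ => ?_
  rw [integral_const_mul, Mmat_eq]
  ring

/-- coefficient vector `c(Φ) = M⁻ᵀ ∫ e^{-tJᵀ} Φ`. -/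
noncomputable def cvec (Φ : Fin d → TestFun) : Fin d → ℝ :=
  Minvᵀ.mulVec (wv J Φ)

/-- `Φ` minus the `φ₀`-correction. -/
noncomputable def sub0 (Φ : Fin d → TestFun) : Fin d → TestFun :=
  fun k => Φ k - (cvec J Minv Φ k) • φ₀

lemma Fv_sub (Φ Ψ : Fin d → TestFun) (t : ℝ) (j : Fin d) :
    Fv J (Φ - Ψ) t j = Fv J Φ t j - Fv J Ψ t j := by
  simp [Fv, mul_sub, Finset.sum_sub_distrib]

lemma wv_sub (Φ Ψ : Fin d → TestFun) (j : Fin d) :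
    wv J (Φ - Ψ) j = wv J Φ j - wv J Ψ j := by
  simp only [wv, Fv_sub]
  exact integral_sub (Fv_integrable J Φ j).integrableOn (Fv_integrable J Ψ j).integrableOn

lemma wv_sub0 (hMl : Minv * Mmat J φ₀ = 1) (Φ : Fin d → TestFun) (j : Fin d) :
    wv J (sub0 J Minv φ₀ Φ) j = 0 := by
  have h1 : sub0 J Minv φ₀ Φ = Φ - fun k => (cvec J Minv Φ k) • φ₀ := rfl
  rw [h1, wv_sub, wv_csmul]
  have h2 : ∑ k, Mmat J φ₀ k j * cvec J Minv Φ k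
      = ((Mmat J φ₀)ᵀ *ᵥ (cvec J Minv Φ)) j := by
    simp [Matrix.mulVec, dotProduct, Matrix.transpose_apply]
  rw [h2, cvec, Matrix.mulVec_mulVec, ← Matrix.transpose_mul, hMl, Matrix.transpose_one,
    Matrix.one_mulVec, sub_self]

end WithPhi

section WithPhi2

variable (Minv : Matrix (Fin d) (Fin d) ℝ) (φ₀ : TestFun)

lemma sub0_val (Φ : Fin d → TestFun) (k : Fin d) (t : ℝ) :
    (sub0 J Minv φ₀ Φ k).1 t = (Φ k).1 t - cvec J Minv Φ k * φ₀.1 t := by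
  simp [sub0]

lemma sub0_tsupport (Φ : Fin d → TestFun) {a b : ℝ}
    (hφ : tsupport φ₀.1 ⊆ Set.Icc a b) (hΦ : ∀ k, tsupport (Φ k).1 ⊆ Set.Icc a b)
    (k : Fin d) : tsupport (sub0 J Minv φ₀ Φ k).1 ⊆ Set.Icc a b := by
  refine closure_minimal (fun t ht => ?_) isClosed_Icc
  by_contra hc
  refine ht ?_
  rw [sub0_val, image_eq_zero_of_notMem_tsupport fun h => hc (hΦ k h),
    image_eq_zero_of_notMem_tsupport fun h => hc (hφ h), mul_zero, sub_zero]

lemma Pv_sub0_isTest (hMl : Minv * Mmat J φ₀ = 1) (Φ : Fin d → TestFun) (i : Fin d) :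
    IsTestFunction fun t => Pv J (sub0 J Minv φ₀ Φ) t i := by
  obtain ⟨a, b', ha, hφ, hΦ⟩ := exists_bounds φ₀ Φ
  exact Pv_isTestFunction J _ ha (sub0_tsupport J Minv φ₀ Φ hφ hΦ)
    (wv_sub0 J Minv φ₀ hMl Φ) i

/-- The solution operator on test data: `σ(Φ) = Ψ` with `L*Ψ + c(Φ)φ₀ = Φ`. -/
noncomputable def sigma0 (hMl : Minv * Mmat J φ₀ = 1) (Φ : Fin d → TestFun) :
    Fin d → TestFun :=
  fun i => ⟨fun t => Pv J (sub0 J Minv φ₀ Φ) t i, Pv_sub0_isTest J Minv φ₀ hMl Φ i⟩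

lemma cvec_add (Φ Ψ : Fin d → TestFun) :
    cvec J Minv (Φ + Ψ) = cvec J Minv Φ + cvec J Minv Ψ := by
  have h : wv J (Φ + Ψ) = wv J Φ + wv J Ψ := funext fun j => wv_add J Φ Ψ j
  simp [cvec, h, Matrix.mulVec_add]

lemma cvec_smul (r : ℝ) (Φ : Fin d → TestFun) :
    cvec J Minv (r • Φ) = r • cvec J Minv Φ := by
  have h : wv J (r • Φ) = r • wv J Φ := funext fun j => wv_smul J r Φ j
  simp [cvec, h, Matrix.mulVec_smul]

lemma sub0_add (Φ Ψ : Fin d → TestFun) :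
    sub0 J Minv φ₀ (Φ + Ψ) = sub0 J Minv φ₀ Φ + sub0 J Minv φ₀ Ψ := by
  funext k
  simp only [sub0, cvec_add, Pi.add_apply, add_smul]
  abel

lemma sub0_smul (r : ℝ) (Φ : Fin d → TestFun) :
    sub0 J Minv φ₀ (r • Φ) = r • sub0 J Minv φ₀ Φ := by
  funext k
  simp only [sub0, cvec_smul, Pi.smul_apply, smul_eq_mul, mul_smul, smul_sub]

lemma sigma0_add (hMl : Minv * Mmat J φ₀ = 1) (Φ Ψ : Fin d → TestFun) :
    sigma0 J Minv φ₀ hMl (Φ + Ψ) = sigma0 J Minv φ₀ hMl Φ + sigma0 J Minv φ₀ hMl Ψ := by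
  funext i
  refine Subtype.ext (funext fun t => ?_)
  have : (sigma0 J Minv φ₀ hMl (Φ + Ψ) i).1 t = Pv J (sub0 J Minv φ₀ (Φ + Ψ)) t i := rfl
  rw [this, sub0_add]
  exact Pv_add J _ _ t i

lemma sigma0_smul (hMl : Minv * Mmat J φ₀ = 1) (r : ℝ) (Φ : Fin d → TestFun) :
    sigma0 J Minv φ₀ hMl (r • Φ) = r • sigma0 J Minv φ₀ hMl Φ := by
  funext i
  refine Subtype.ext (funext fun t => ?_)
  have : (sigma0 J Minv φ₀ hMl (r • Φ) i).1 t = Pv J (sub0 J Minv φ₀ (r • Φ)) t i := rfl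
  rw [this, sub0_smul]
  exact Pv_smul J r _ t i

/-- Identity (D): every test tuple decomposes as `L*σ(Φ) + c(Φ)·φ₀ = Φ`. -/
lemma keyD (hMl : Minv * Mmat J φ₀ = 1) (Φ : Fin d → TestFun) (j : Fin d) :
    Lmap J (sigma0 J Minv φ₀ hMl Φ) j + cvec J Minv Φ j • φ₀ = Φ j := by
  refine Subtype.ext (funext fun t => ?_)
  have hval : ((Lmap J (sigma0 J Minv φ₀ hMl Φ) j + cvec J Minv Φ j • φ₀ : TestFun) : ℝ → ℝ) t
      = (Lmap J (sigma0 J Minv φ₀ hMl Φ) j).1 t + cvec J Minv Φ j * φ₀.1 t := by simp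
  rw [hval, Lmap_val]
  have hσ : ∀ k, ((sigma0 J Minv φ₀ hMl Φ k) : ℝ → ℝ) = fun t => Pv J (sub0 J Minv φ₀ Φ) t k :=
    fun k => rfl
  have hder : _root_.deriv (fun t => Pv J (sub0 J Minv φ₀ Φ) t j) t
      = ∑ k, Jᵀ j k * Pv J (sub0 J Minv φ₀ Φ) t k - (sub0 J Minv φ₀ Φ j).1 t :=
    (Pv_hasDerivAt J _ t j).deriv
  simp only [hσ, hder]
  have hswap : ∑ k, Jᵀ j k * Pv J (sub0 J Minv φ₀ Φ) t k
      = ∑ i, J i j * Pv J (sub0 J Minv φ₀ Φ) t i :=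
    Finset.sum_congr rfl fun k _ => by rw [Matrix.transpose_apply]
  rw [sub0_val] at hder ⊢
  rw [hswap]
  ring

/-- Identity (E), part 1: `c(L*Ψ) = 0`. -/
lemma cvec_Lmap (φ₀ : TestFun) (Ψ : Fin d → TestFun) : cvec J Minv (Lmap J Ψ) = 0 := by
  obtain ⟨a, b', ha, hφ, hΨ⟩ := exists_bounds φ₀ Ψ
  have h : wv J (Lmap J Ψ) = 0 := funext fun j => wv_Lmap J Ψ ha hΨ j
  simp [cvec, h, Matrix.mulVec_zero]

lemma sub0_Lmap (Ψ : Fin d → TestFun) : sub0 J Minv φ₀ (Lmap J Ψ) = Lmap J Ψ := by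
  funext k
  rw [sub0, cvec_Lmap J Minv φ₀ Ψ]
  simp

/-- Identity (E), part 2: `σ(L*Ψ) = Ψ`. -/
lemma sigma0_Lmap (hMl : Minv * Mmat J φ₀ = 1) (Ψ : Fin d → TestFun) :
    sigma0 J Minv φ₀ hMl (Lmap J Ψ) = Ψ := by
  obtain ⟨a, b', ha, hφ, hΨ⟩ := exists_bounds φ₀ Ψ
  funext i
  refine Subtype.ext (funext fun t => ?_)
  have h1 : (sigma0 J Minv φ₀ hMl (Lmap J Ψ) i).1 t = Pv J (sub0 J Minv φ₀ (Lmap J Ψ)) t i := rfl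
  rw [h1, sub0_Lmap J Minv φ₀ Ψ]
  exact Pv_Lmap J Ψ ha hΨ t i

lemma cvec_single_phi (hMr : Mmat J φ₀ * Minv = 1) (i : Fin d) :
    cvec J Minv (Pi.single i φ₀) = fun j => (1 : Matrix (Fin d) (Fin d) ℝ) i j := by
  funext j
  have h : wv J (Pi.single i φ₀) = fun j => Mmat J φ₀ i j :=
    funext fun j => wv_single_phi J φ₀ i j
  rw [cvec, h]
  have : (Minvᵀ *ᵥ fun j => Mmat J φ₀ i j) j = ∑ k, Mmat J φ₀ i k * Minv k j := by
    simp [Matrix.mulVec, dotProduct, Matrix.transpose_apply, mul_comm]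
  rw [this, ← Matrix.mul_apply, hMr]

lemma sub0_single_phi (hMr : Mmat J φ₀ * Minv = 1) (i : Fin d) :
    sub0 J Minv φ₀ (Pi.single i φ₀) = 0 := by
  funext k
  rw [sub0, cvec_single_phi J Minv φ₀ hMr]
  rcases eq_or_ne k i with rfl | hk
  · simp [Matrix.one_apply_eq]
  · simp [Pi.single_eq_of_ne hk, Matrix.one_apply_ne (Ne.symm hk)]

lemma Pv_zero (t : ℝ) (i : Fin d) : Pv J (0 : Fin d → TestFun) t i = 0 := by
  have hF : ∀ s j, Fv J (0 : Fin d → TestFun) s j = 0 := fun s j =>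
    Fv_eq_zero J _ (fun k => rfl) j
  have hK : ∀ j, Kv J (0 : Fin d → TestFun) t j = 0 := by
    intro j
    rw [Kv, intervalIntegral.integral_congr (g := fun _ => (0:ℝ)) fun s _ => hF s j]
    simp
  simp [Pv, hK]

end WithPhi2

lemma tderiv_zero : tderiv (0 : TestFun) = 0 := by
  refine Subtype.ext (funext fun t => ?_)
  show _root_.deriv ((0 : TestFun) : ℝ → ℝ) t = 0
  rw [show ((0 : TestFun) : ℝ → ℝ) = fun _ => (0:ℝ) from rfl]
  exact deriv_const t 0

lemma Lmap_single (i j : Fin d) (φ : TestFun) :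
    Lmap J (Pi.single i φ) j = -((Pi.single i (tderiv φ) : Fin d → TestFun) j) + ∑ k, (J i k) • (Pi.single k φ : Fin d → TestFun) j := by
  have hsum1 : ∑ k, (J k j) • Pi.single i φ k = (J i j) • φ := by
    rw [Finset.sum_eq_single i (fun k _ hk => by rw [Pi.single_eq_of_ne hk, smul_zero])
      (fun h => absurd (Finset.mem_univ i) h), Pi.single_eq_same]
  have hsum2 : ∑ k, (J i k) • (Pi.single k φ : Fin d → TestFun) j = (J i j) • φ := by
    rw [Finset.sum_eq_single j (fun k _ hk => by rw [Pi.single_eq_of_ne (Ne.symm hk), smul_zero])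
      (fun h => absurd (Finset.mem_univ j) h), Pi.single_eq_same]
  have hder : tderiv ((Pi.single i φ : Fin d → TestFun) j) = (Pi.single i (tderiv φ) : Fin d → TestFun) j := by
    rcases eq_or_ne j i with rfl | hj
    · rw [Pi.single_eq_same, Pi.single_eq_same]
    · rw [Pi.single_eq_of_ne hj, Pi.single_eq_of_ne hj, tderiv_zero]
  have h0 : Lmap J (Pi.single i φ) j
      = -(tderiv ((Pi.single i φ : Fin d → TestFun) j)) + ∑ k, (J k j) • Pi.single i φ k := rfl
  rw [h0, hsum1, hsum2, hder]

lemma sigma0_single_phi (Minv : Matrix (Fin d) (Fin d) ℝ) (φ₀ : TestFun)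
    (hMl : Minv * Mmat J φ₀ = 1) (hMr : Mmat J φ₀ * Minv = 1) (i : Fin d) :
    sigma0 J Minv φ₀ hMl (Pi.single i φ₀) = 0 := by
  funext k
  refine Subtype.ext (funext fun t => ?_)
  have h1 : (sigma0 J Minv φ₀ hMl (Pi.single i φ₀) k).1 t
      = Pv J (sub0 J Minv φ₀ (Pi.single i φ₀)) t k := rfl
  rw [h1, sub0_single_phi J Minv φ₀ hMr, Pv_zero]
  rfl

end ODEAux


/-- Existence and uniqueness for the distributional initial value problem
`u̇ + J u = b`, `⟨u, φ₀⟩ = u⁰`, provided `∫₀^∞ e^{-Jt} φ₀(t) dt` is invertible. -/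
theorem differential_part_exists_unique {d : ℕ} (J : Matrix (Fin d) (Fin d) ℝ)
    (b : Fin d → Distribution') (u0 : Fin d → ℝ) (φ₀ : TestFun)
    (hφ₀ : ∫ t in Set.Ioi (0 : ℝ), φ₀.1 t = 1)
    (hM : IsUnit (Matrix.of fun i j : Fin d =>
      ∫ t in Set.Ioi (0 : ℝ), (NormedSpace.exp (-(t • J))) i j * φ₀.1 t)) :
    ∃! u : Fin d → Distribution',
      SolvesODE J b u ∧ ∀ i, u i φ₀ = u0 i := by
  classical
  have hMu : IsUnit (ODEAux.Mmat J φ₀) := hM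
  set Minv : Matrix (Fin d) (Fin d) ℝ := ↑hMu.unit⁻¹ with hMinvdef
  have hMl : Minv * ODEAux.Mmat J φ₀ = 1 := hMu.val_inv_mul
  have hMr : ODEAux.Mmat J φ₀ * Minv = 1 := hMu.mul_val_inv
  let σL : (Fin d → TestFun) →ₗ[ℝ] (Fin d → TestFun) :=
    { toFun := ODEAux.sigma0 J Minv φ₀ hMl
      map_add' := ODEAux.sigma0_add J Minv φ₀ hMl
      map_smul' := ODEAux.sigma0_smul J Minv φ₀ hMl }
  let cL : (Fin d → TestFun) →ₗ[ℝ] (Fin d → ℝ) :=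
    { toFun := ODEAux.cvec J Minv
      map_add' := ODEAux.cvec_add J Minv
      map_smul' := ODEAux.cvec_smul J Minv }
  let BL : (Fin d → TestFun) →ₗ[ℝ] ℝ :=
    { toFun := fun Ψ => ∑ k, b k (Ψ k)
      map_add' := fun Φ Ψ => by simp [map_add, Finset.sum_add_distrib]
      map_smul' := fun r Φ => by simp [_root_.map_smul, Finset.mul_sum] }
  let u0L : (Fin d → ℝ) →ₗ[ℝ] ℝ :=
    { toFun := fun cc => ∑ k, u0 k * cc k
      map_add' := fun x y => by simp [mul_add, Finset.sum_add_distrib]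
      map_smul' := fun r x => by
        simp only [Pi.smul_apply, smul_eq_mul, RingHom.id_apply, Finset.mul_sum]
        exact Finset.sum_congr rfl fun k _ => by ring }
  let T : (Fin d → TestFun) →ₗ[ℝ] ℝ := BL ∘ₗ σL + u0L ∘ₗ cL
  let U : Fin d → Distribution' := fun i =>
    T ∘ₗ LinearMap.single ℝ (fun _ : Fin d => TestFun) i
  have hT_Lmap : ∀ Ψ : Fin d → TestFun, T (ODEAux.Lmap J Ψ) = ∑ k, b k (Ψ k) := by
    intro Ψ
    have h1 : T (ODEAux.Lmap J Ψ) = BL (ODEAux.sigma0 J Minv φ₀ hMl (ODEAux.Lmap J Ψ))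
        + u0L (ODEAux.cvec J Minv (ODEAux.Lmap J Ψ)) := rfl
    rw [h1, ODEAux.sigma0_Lmap J Minv φ₀ hMl Ψ, ODEAux.cvec_Lmap J Minv φ₀ Ψ]
    have h2 : u0L (0 : Fin d → ℝ) = 0 := map_zero u0L
    rw [h2, add_zero]
    rfl
  have hsolves : SolvesODE J b U := by
    intro φ
    funext i
    simp only [Pi.add_apply]
    have hmv : (J.mulVec fun k => U k φ) i = ∑ j, J i j * U j φ := by
      simp [Matrix.mulVec, dotProduct]
    rw [hmv]
    have hTlin : T (-(Pi.single i (tderiv φ) : Fin d → TestFun) + ∑ j, (J i j) • (Pi.single j φ : Fin d → TestFun))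
        = -(U i (tderiv φ)) + ∑ j, J i j * U j φ := by
      rw [map_add, map_neg, map_sum]
      simp only [_root_.map_smul, smul_eq_mul]
      rfl
    rw [← hTlin]
    have harg : (-(Pi.single i (tderiv φ) : Fin d → TestFun) + ∑ j, (J i j) • (Pi.single j φ : Fin d → TestFun))
        = ODEAux.Lmap J (Pi.single i φ) := by
      funext j
      rw [Pi.add_apply, ODEAux.Lmap_single]
      simp [Finset.sum_apply]
    rw [harg, hT_Lmap]
    rw [Finset.sum_eq_single i (fun k _ hk => by rw [Pi.single_eq_of_ne hk, map_zero])
      (fun h => absurd (Finset.mem_univ i) h), Pi.single_eq_same]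
  have hinit : ∀ i, U i φ₀ = u0 i := by
    intro i
    have h1 : U i φ₀ = BL (ODEAux.sigma0 J Minv φ₀ hMl (Pi.single i φ₀))
        + u0L (ODEAux.cvec J Minv (Pi.single i φ₀)) := rfl
    rw [h1, ODEAux.sigma0_single_phi J Minv φ₀ hMl hMr i,
      ODEAux.cvec_single_phi J Minv φ₀ hMr i]
    have h2 : BL (0 : Fin d → TestFun) = 0 := map_zero BL
    rw [h2, zero_add]
    show ∑ k, u0 k * (1 : Matrix (Fin d) (Fin d) ℝ) i k = u0 i
    rw [Finset.sum_eq_single i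
      (fun k _ hk => by rw [Matrix.one_apply_ne (Ne.symm hk), mul_zero])
      (fun h => absurd (Finset.mem_univ i) h), Matrix.one_apply_eq, mul_one]
  refine ⟨U, ⟨hsolves, hinit⟩, ?_⟩
  rintro v ⟨hvs, hvi⟩
  funext i
  refine LinearMap.ext fun φ => ?_
  have hWhom : ∀ (ψ : TestFun) (k : Fin d),
      ∑ j, J k j * (v j ψ - U j ψ) = v k (tderiv ψ) - U k (tderiv ψ) := by
    intro ψ k
    have h1 := congrFun (hvs ψ) k
    have h2 := congrFun (hsolves ψ) k
    simp only [Pi.add_apply, Matrix.mulVec, dotProduct] at h1 h2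
    have h3 : ∑ j, J k j * (v j ψ - U j ψ)
        = ∑ j, J k j * v j ψ - ∑ j, J k j * U j ψ := by
      rw [← Finset.sum_sub_distrib]
      exact Finset.sum_congr rfl fun j _ => by ring
    rw [h3]
    linarith
  have hkeyD := ODEAux.keyD J Minv φ₀ hMl (Pi.single i φ)
  set Ψ' := ODEAux.sigma0 J Minv φ₀ hMl (Pi.single i φ) with hΨ'
  have hstep1 : v i φ - U i φ
      = ∑ j, (v j ((Pi.single i φ : Fin d → TestFun) j)
          - U j ((Pi.single i φ : Fin d → TestFun) j)) := by
    rw [Finset.sum_eq_single i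
      (fun k _ hk => by rw [Pi.single_eq_of_ne hk, map_zero, map_zero, sub_zero])
      (fun h => absurd (Finset.mem_univ i) h), Pi.single_eq_same]
  have hexp : ∀ j, v j ((Pi.single i φ : Fin d → TestFun) j)
        - U j ((Pi.single i φ : Fin d → TestFun) j)
      = (v j (ODEAux.Lmap J Ψ' j) - U j (ODEAux.Lmap J Ψ' j))
        + ODEAux.cvec J Minv (Pi.single i φ) j * (v j φ₀ - U j φ₀) := by
    intro j
    rw [← hkeyD j, map_add, map_add, _root_.map_smul, _root_.map_smul]
    simp only [smul_eq_mul]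
    ring
  have hLexp : ∀ j, v j (ODEAux.Lmap J Ψ' j) - U j (ODEAux.Lmap J Ψ' j)
      = -(v j (tderiv (Ψ' j)) - U j (tderiv (Ψ' j)))
        + ∑ k, J k j * (v j (Ψ' k) - U j (Ψ' k)) := by
    intro j
    have h0 : ODEAux.Lmap J Ψ' j = -(tderiv (Ψ' j)) + ∑ k, (J k j) • Ψ' k := rfl
    rw [h0, map_add, map_add, map_neg, map_neg, map_sum, map_sum]
    simp only [_root_.map_smul, smul_eq_mul]
    have hs : ∑ k, J k j * (v j (Ψ' k) - U j (Ψ' k))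
        = ∑ k, J k j * v j (Ψ' k) - ∑ k, J k j * U j (Ψ' k) := by
      rw [← Finset.sum_sub_distrib]
      exact Finset.sum_congr rfl fun k _ => by ring
    rw [hs]
    ring
  have hsum0 : ∑ j, (v j (ODEAux.Lmap J Ψ' j) - U j (ODEAux.Lmap J Ψ' j)) = 0 := by
    have h1 : ∑ j, (v j (ODEAux.Lmap J Ψ' j) - U j (ODEAux.Lmap J Ψ' j))
        = ∑ j, (-(v j (tderiv (Ψ' j)) - U j (tderiv (Ψ' j)))
            + ∑ k, J k j * (v j (Ψ' k) - U j (Ψ' k))) :=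
      Finset.sum_congr rfl fun j _ => hLexp j
    rw [h1, Finset.sum_add_distrib, Finset.sum_comm]
    have h2 : ∀ k, ∑ j, J k j * (v j (Ψ' k) - U j (Ψ' k))
        = v k (tderiv (Ψ' k)) - U k (tderiv (Ψ' k)) := fun k => hWhom (Ψ' k) k
    simp only [h2, Finset.sum_neg_distrib]
    ring
  have hphi0 : ∀ j, v j φ₀ - U j φ₀ = 0 := fun j => by rw [hvi j, hinit j, sub_self]
  have hfinal : v i φ - U i φ = 0 := by
    rw [hstep1]
    have := Finset.sum_congr rfl fun j (_ : j ∈ Finset.univ) => hexp j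
    rw [this, Finset.sum_add_distrib, hsum0, zero_add]
    simp [hphi0]
  exact sub_eq_zero.1 hfinal
end

section
/- Let d, q be natural numbers with d + q = n, let J be a d×d real matrix, N a nilpotent q×q real matrix, and set Ā = blockdiag(I_d, N) and B̄ = blockdiag(J, I_q). Let f be an n-tuple of distributions on (0,∞), u⁰ = (u⁰_1,…,u⁰_d) ∈ ℝ^d, and let φ₀ be a test function with ∫₀^∞ φ₀(t)dt = 1 such that the d×d matrix ∫₀^∞ e^{−Jt}·φ₀(t) dt is invertible. Then there exists a unique n-tuple y of distributions on (0,∞) solving Ā·ẏ + B̄·y = f and satisfying ⟨y_i, φ₀⟩ = u⁰_i for i = 1,…,d. -/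
open MeasureTheory Function
open scoped ContDiff

/-- A distribution on `(0,∞)`: a linear functional on test functions. -/
abbrev DistributionIoi : Type := TestFun →ₗ[ℝ] ℝ

/-- `x` solves the linear DAE `A ẋ + B x = f` in the distributional sense on `(0,∞)`. -/
def SolvesDAE {n : ℕ} (A B : Matrix (Fin n) (Fin n) ℝ) (f x : Fin n → DistributionIoi) : Prop :=
  ∀ φ : TestFun,
    A.mulVec (fun i => -(x i (tderiv φ))) + B.mulVec (fun i => x i φ) = fun i => f i φ

namespace DAE

open MeasureTheory

lemma TestFun.cont (φ : TestFun) : Continuous (φ : ℝ → ℝ) := φ.2.1.continuous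

lemma TestFun.integrable (φ : TestFun) : Integrable (φ : ℝ → ℝ) :=
  φ.2.1.continuous.integrable_of_hasCompactSupport φ.2.2.1

lemma TestFun.zero_at (φ : TestFun) {x : ℝ} (hx : x ≤ 0) : (φ : ℝ → ℝ) x = 0 :=
  image_eq_zero_of_notMem_tsupport (fun h => absurd (φ.2.2.2 h) (by simpa using hx))

/-- The integral over `(0,∞)` as a linear functional on test functions. -/
noncomputable def intI : TestFun →ₗ[ℝ] ℝ where
  toFun φ := ∫ t in Set.Ioi (0:ℝ), (φ : ℝ → ℝ) t
  map_add' φ ψ := by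
    simp only [Submodule.coe_add, Pi.add_apply]
    exact integral_add (TestFun.integrable φ).integrableOn (TestFun.integrable ψ).integrableOn
  map_smul' c φ := by
    simp only [SetLike.val_smul, Pi.smul_apply, smul_eq_mul, RingHom.id_apply]
    exact integral_smul c _

lemma integral_Ioi_eq_intervalIntegral {h : ℝ → ℝ} (hint : IntegrableOn h (Set.Ioi 0))
    {R : ℝ} (hR : 0 ≤ R) (hzero : ∀ t, R < t → h t = 0) :
    ∫ t in Set.Ioi (0:ℝ), h t = ∫ t in (0:ℝ)..R, h t := by
  rw [intervalIntegral.integral_of_le hR, ← Set.Ioc_union_Ioi_eq_Ioi hR,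
    setIntegral_union (Set.Ioc_disjoint_Ioi le_rfl) measurableSet_Ioi
      (hint.mono_set (fun x hx => hx.1))
      (hint.mono_set (fun x hx => lt_of_le_of_lt hR hx))]
  have h0 : ∫ x in Set.Ioi R, h x = 0 :=
    setIntegral_eq_zero_of_forall_eq_zero (fun t ht => hzero t ht)
  rw [h0, add_zero]

/-- A bound above the support. -/
lemma TestFun.exists_bound (φ : TestFun) :
    ∃ R : ℝ, 0 ≤ R ∧ ∀ t, R < t → t ∉ tsupport (φ : ℝ → ℝ) := by
  obtain ⟨R, hR⟩ := (φ.2.2.1.isCompact.bddAbove).imp (fun R hR => hR)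
  exact ⟨max R 0, le_max_right _ _, fun t ht hmem =>
    absurd (hR hmem) (not_le.mpr (lt_of_le_of_lt (le_max_left R 0) ht))⟩

lemma intI_apply (φ : TestFun) : intI φ = ∫ t in Set.Ioi (0:ℝ), (φ : ℝ → ℝ) t := rfl

noncomputable def primFn (h : ℝ → ℝ) (x : ℝ) : ℝ := ∫ t in (0:ℝ)..x, h t

lemma primFn_hasDerivAt {h : ℝ → ℝ} (hc : Continuous h) (x : ℝ) :
    HasDerivAt (primFn h) (h x) x :=
  intervalIntegral.integral_hasDerivAt_right (hc.intervalIntegrable _ _)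
    (hc.stronglyMeasurable.stronglyMeasurableAtFilter) hc.continuousAt

lemma deriv_primFn {h : ℝ → ℝ} (hc : Continuous h) : deriv (primFn h) = h :=
  funext fun x => (primFn_hasDerivAt hc x).deriv

lemma contDiff_primFn {h : ℝ → ℝ} (hh : ContDiff ℝ ∞ h) : ContDiff ℝ ∞ (primFn h) := by
  rw [contDiff_infty_iff_deriv]
  refine ⟨fun x => (primFn_hasDerivAt hh.continuous x).differentiableAt, ?_⟩
  rw [deriv_primFn hh.continuous]; exact hh

lemma isTestFunction_primFn (φ : TestFun) (h0 : intI φ = 0) :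
    IsTestFunction (primFn (φ : ℝ → ℝ)) := by
  by_cases hne : (tsupport (φ : ℝ → ℝ)).Nonempty
  case neg =>
    have hphi : (φ : ℝ → ℝ) = fun _ => 0 := by
      funext x
      exact image_eq_zero_of_notMem_tsupport (fun h => hne ⟨x, h⟩)
    have hz : primFn (φ : ℝ → ℝ) = ((0 : TestFun) : ℝ → ℝ) := by
      funext x; simp [primFn, hphi]
    rw [hz]; exact (0 : TestFun).2
  case pos =>
    set K := tsupport (φ : ℝ → ℝ) with hKdef
    have hKc : IsCompact K := φ.2.2.1
    have ha : sInf K ∈ K := hKc.sInf_mem hne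
    have hb : sSup K ∈ K := hKc.sSup_mem hne
    have ha0 : 0 < sInf K := φ.2.2.2 ha
    have hout : ∀ x, x ∉ Set.Icc (sInf K) (sSup K) → primFn (φ : ℝ → ℝ) x = 0 := by
      intro x hx
      rw [Set.mem_Icc, not_and_or] at hx
      rcases hx with hx1 | hx2
      · have hEq : Set.EqOn (φ : ℝ → ℝ) 0 (Set.uIcc 0 x) := by
          intro t ht
          apply image_eq_zero_of_notMem_tsupport
          intro hmem
          have h1 : sInf K ≤ t := csInf_le hKc.bddBelow hmem
          have h2 : t ≤ max 0 x := ht.2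
          exact absurd (h1.trans h2) (not_le.mpr (max_lt ha0 (not_le.mp hx1)))
        rw [primFn, intervalIntegral.integral_congr hEq]
        simp
      · have hxb : sSup K < x := not_le.mp hx2
        have hR : (0:ℝ) ≤ x := le_of_lt (lt_of_lt_of_le ha0 ((csInf_le_csSup hne hKc.bddBelow hKc.bddAbove).trans hxb.le))
        have hzero : ∀ t, x < t → (φ : ℝ → ℝ) t = 0 := by
          intro t ht
          apply image_eq_zero_of_notMem_tsupport
          intro hmem
          exact absurd (le_csSup hKc.bddAbove hmem) (not_le.mpr (hxb.trans ht))
        have := integral_Ioi_eq_intervalIntegral (TestFun.integrable φ).integrableOn hR hzero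
        rw [primFn, ← this]
        exact h0
    have hsupp : Function.support (primFn (φ : ℝ → ℝ)) ⊆ Set.Icc (sInf K) (sSup K) := by
      intro x hx
      by_contra hmem
      exact hx (hout x hmem)
    refine ⟨contDiff_primFn φ.2.1, HasCompactSupport.intro isCompact_Icc hout, ?_⟩
    refine (closure_minimal hsupp isClosed_Icc).trans ?_
    intro x hx
    exact lt_of_lt_of_le ha0 hx.1

end DAE
namespace DAE

lemma TestFun.diff (φ : TestFun) : Differentiable ℝ (φ : ℝ → ℝ) :=
  (contDiff_infty_iff_deriv.mp φ.2.1).1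

lemma IsTestFunction.smul_smooth {g : ℝ → ℝ} (hg : ContDiff ℝ ∞ g) (φ : TestFun) :
    IsTestFunction (fun t => g t * (φ : ℝ → ℝ) t) := by
  refine ⟨hg.mul φ.2.1, ?_, ?_⟩
  · exact HasCompactSupport.intro φ.2.2.1.isCompact
      (fun x hx => by rw [image_eq_zero_of_notMem_tsupport hx, mul_zero])
  · refine (closure_minimal ?_ (isClosed_tsupport _)).trans φ.2.2.2
    intro x hx
    have : (φ : ℝ → ℝ) x ≠ 0 := fun h => hx (by simp [h])
    exact subset_closure this

/-- Multiplication by a fixed smooth function, as a linear map on test functions. -/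
noncomputable def mulTF (g : ℝ → ℝ) (hg : ContDiff ℝ ∞ g) : TestFun →ₗ[ℝ] TestFun where
  toFun φ := ⟨fun t => g t * (φ : ℝ → ℝ) t, IsTestFunction.smul_smooth hg φ⟩
  map_add' φ ψ := Subtype.ext (funext fun x => by
    simp only [Submodule.coe_add, Pi.add_apply]; ring)
  map_smul' c φ := Subtype.ext (funext fun x => by
    simp only [SetLike.val_smul, Pi.smul_apply, smul_eq_mul, RingHom.id_apply]; ring)

lemma mulTF_coe (g : ℝ → ℝ) (hg : ContDiff ℝ ∞ g) (φ : TestFun) (t : ℝ) :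
    (mulTF g hg φ : ℝ → ℝ) t = g t * (φ : ℝ → ℝ) t := rfl

lemma tderiv_coe (φ : TestFun) : (tderiv φ : ℝ → ℝ) = deriv (φ : ℝ → ℝ) := rfl

/-- Derivative as a linear map on test functions. -/
noncomputable def tderivL : TestFun →ₗ[ℝ] TestFun where
  toFun := tderiv
  map_add' φ ψ := Subtype.ext (funext fun x => by
    simp only [tderiv_coe, Submodule.coe_add, Pi.add_apply]
    rw [show ((φ : ℝ → ℝ) + (ψ : ℝ → ℝ)) = fun t => (φ : ℝ → ℝ) t + (ψ : ℝ → ℝ) t from rfl,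
      deriv_fun_add (TestFun.diff φ x) (TestFun.diff ψ x)])
  map_smul' c φ := Subtype.ext (funext fun x => by
    simp only [tderiv_coe, SetLike.val_smul, Pi.smul_apply, smul_eq_mul, RingHom.id_apply]
    rw [show (c • (φ : ℝ → ℝ)) = fun t => c * (φ : ℝ → ℝ) t from rfl,
      deriv_const_mul c (TestFun.diff φ x)])

lemma tderivL_apply (φ : TestFun) : tderivL φ = tderiv φ := rfl

/-- Leibniz rule. -/
lemma tderiv_mulTF (g : ℝ → ℝ) (hg : ContDiff ℝ ∞ g) (φ : TestFun) :
    tderiv (mulTF g hg φ) =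
      mulTF (deriv g) (contDiff_infty_iff_deriv.mp hg).2 φ + mulTF g hg (tderiv φ) := by
  apply Subtype.ext; funext x
  show deriv (fun t => g t * (φ : ℝ → ℝ) t) x
      = deriv g x * (φ : ℝ → ℝ) x + g x * deriv (φ : ℝ → ℝ) x
  exact deriv_mul (hg.differentiable (by norm_num) x) (TestFun.diff φ x)

set_option maxHeartbeats 1000000 in
lemma intI_tderiv (φ : TestFun) : intI (tderiv φ) = 0 := by
  obtain ⟨R, hR0, hz⟩ := TestFun.exists_bound φ
  have hsub : tsupport (deriv (φ : ℝ → ℝ)) ⊆ tsupport (φ : ℝ → ℝ) :=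
    closure_minimal support_deriv_subset (isClosed_tsupport _)
  have hz' : ∀ t, R + 1 < t → deriv (φ : ℝ → ℝ) t = 0 := fun t ht =>
    image_eq_zero_of_notMem_tsupport (fun hmem => hz t (by linarith) (hsub hmem))
  have hint : MeasureTheory.IntegrableOn (deriv (φ : ℝ → ℝ)) (Set.Ioi 0) :=
    (TestFun.integrable (tderiv φ)).integrableOn
  rw [intI_apply, tderiv_coe, integral_Ioi_eq_intervalIntegral hint (by linarith) hz']
  rw [intervalIntegral.integral_deriv_eq_sub (fun x _ => TestFun.diff φ x)
      ((TestFun.cont (tderiv φ)).intervalIntegrable _ _)]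
  rw [image_eq_zero_of_notMem_tsupport (hz (R+1) (by linarith)), TestFun.zero_at φ le_rfl, sub_zero]
lemma primFn_tderiv (φ : TestFun) : primFn ((tderiv φ : ℝ → ℝ)) = (φ : ℝ → ℝ) := by
  funext x
  rw [primFn, tderiv_coe,
    intervalIntegral.integral_deriv_eq_sub (fun t _ => TestFun.diff φ t)
      ((TestFun.cont (tderiv φ)).intervalIntegrable _ _),
    TestFun.zero_at φ le_rfl, sub_zero]

lemma primFn_add (φ ψ : TestFun) :
    primFn ((φ + ψ : TestFun) : ℝ → ℝ) = primFn (φ : ℝ → ℝ) + primFn (ψ : ℝ → ℝ) := by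
  funext x
  simp only [primFn, Pi.add_apply, Submodule.coe_add]
  exact intervalIntegral.integral_add ((TestFun.cont φ).intervalIntegrable _ _)
    ((TestFun.cont ψ).intervalIntegrable _ _)

lemma primFn_smul (c : ℝ) (φ : TestFun) :
    primFn ((c • φ : TestFun) : ℝ → ℝ) = c • primFn (φ : ℝ → ℝ) := by
  funext x
  simp only [primFn, Pi.smul_apply, SetLike.val_smul, smul_eq_mul]
  rw [intervalIntegral.integral_const_mul]

/-- The antiderivative operator: `P φ` is the primitive of `φ - (∫φ)·φ₀`. -/
noncomputable def Pmap (φ₀ : TestFun) (hφ₀ : intI φ₀ = 1) : TestFun →ₗ[ℝ] TestFun where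
  toFun φ := ⟨primFn ((φ - intI φ • φ₀ : TestFun) : ℝ → ℝ),
    isTestFunction_primFn _ (by simp [hφ₀])⟩
  map_add' φ ψ := Subtype.ext (by
    have h : φ + ψ - intI (φ + ψ) • φ₀ = (φ - intI φ • φ₀) + (ψ - intI ψ • φ₀) := by
      rw [map_add]; module
    show primFn _ = _
    rw [h, primFn_add]
    rfl)
  map_smul' c φ := Subtype.ext (by
    have h : c • φ - intI (c • φ) • φ₀ = c • (φ - intI φ • φ₀) := by
      rw [_root_.map_smul, smul_eq_mul]; module
    show primFn _ = _
    rw [h, primFn_smul]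
    rfl)

lemma Pmap_coe (φ₀ : TestFun) (hφ₀ : intI φ₀ = 1) (φ : TestFun) :
    (Pmap φ₀ hφ₀ φ : ℝ → ℝ) = primFn ((φ - intI φ • φ₀ : TestFun) : ℝ → ℝ) := rfl

lemma tderiv_Pmap (φ₀ : TestFun) (hφ₀ : intI φ₀ = 1) (φ : TestFun) :
    tderiv (Pmap φ₀ hφ₀ φ) = φ - intI φ • φ₀ := by
  apply Subtype.ext
  rw [tderiv_coe, Pmap_coe, deriv_primFn (TestFun.cont _)]

lemma Pmap_tderiv (φ₀ : TestFun) (hφ₀ : intI φ₀ = 1) (φ : TestFun) :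
    Pmap φ₀ hφ₀ (tderiv φ) = φ := by
  apply Subtype.ext
  rw [Pmap_coe, intI_tderiv, zero_smul, sub_zero, primFn_tderiv]

lemma Pmap_phi0 (φ₀ : TestFun) (hφ₀ : intI φ₀ = 1) : Pmap φ₀ hφ₀ φ₀ = 0 := by
  have h : φ₀ - intI φ₀ • φ₀ = (0 : TestFun) := by rw [hφ₀, one_smul, sub_self]
  apply Subtype.ext
  rw [Pmap_coe, h]
  funext x
  simp [primFn]

/-- The unique distribution `w` with `ẇ = g` and `⟨w,φ₀⟩ = c`. -/
noncomputable def solveD (φ₀ : TestFun) (hφ₀ : intI φ₀ = 1) (g : DistributionIoi) (c : ℝ) :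
    DistributionIoi := c • (intI : TestFun →ₗ[ℝ] ℝ) - g ∘ₗ Pmap φ₀ hφ₀

lemma solveD_apply (φ₀ : TestFun) (hφ₀ : intI φ₀ = 1) (g : DistributionIoi) (c : ℝ) (φ : TestFun) :
    solveD φ₀ hφ₀ g c φ = c * intI φ - g (Pmap φ₀ hφ₀ φ) := rfl

lemma solveD_deriv (φ₀ : TestFun) (hφ₀ : intI φ₀ = 1) (g : DistributionIoi) (c : ℝ) (φ : TestFun) :
    -(solveD φ₀ hφ₀ g c (tderiv φ)) = g φ := by
  rw [solveD_apply, intI_tderiv, Pmap_tderiv]; ring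

lemma solveD_init (φ₀ : TestFun) (hφ₀ : intI φ₀ = 1) (g : DistributionIoi) (c : ℝ) :
    solveD φ₀ hφ₀ g c φ₀ = c := by
  rw [solveD_apply, hφ₀, Pmap_phi0, map_zero, mul_one, sub_zero]

lemma solve_unique (φ₀ : TestFun) (hφ₀ : intI φ₀ = 1) (g : DistributionIoi) (c : ℝ)
    (w : DistributionIoi) (hw : ∀ φ, -(w (tderiv φ)) = g φ) (hwi : w φ₀ = c) :
    w = solveD φ₀ hφ₀ g c := by
  apply LinearMap.ext
  intro φ
  have key : φ = intI φ • φ₀ + tderiv (Pmap φ₀ hφ₀ φ) := by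
    rw [tderiv_Pmap]; module
  calc w φ = w (intI φ • φ₀ + tderiv (Pmap φ₀ hφ₀ φ)) := by rw [← key]
    _ = intI φ * w φ₀ + w (tderiv (Pmap φ₀ hφ₀ φ)) := by
        rw [map_add, _root_.map_smul]; rfl
    _ = intI φ * c - g (Pmap φ₀ hφ₀ φ) := by
        rw [hwi, ← hw (Pmap φ₀ hφ₀ φ)]; ring
    _ = solveD φ₀ hφ₀ g c φ := by rw [solveD_apply]; ring

end DAE
namespace DAE
section ExpSection
open NormedSpace

variable {d : ℕ}

lemma expM_entry (A : Matrix (Fin d) (Fin d) ℝ) :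
    (∀ i j : Fin d, ContDiff ℝ ∞ (fun t : ℝ => exp (t • A) i j)) ∧
    (∀ i j : Fin d, deriv (fun t : ℝ => exp (t • A) i j) =
      fun t => ∑ k, exp (t • A) i k * A k j) := by
  letI : SeminormedRing (Matrix (Fin d) (Fin d) ℝ) := Matrix.linftyOpSemiNormedRing
  letI : NormedRing (Matrix (Fin d) (Fin d) ℝ) := Matrix.linftyOpNormedRing
  letI : NormedAlgebra ℝ (Matrix (Fin d) (Fin d) ℝ) := Matrix.linftyOpNormedAlgebra
  have hder : ∀ (B : Matrix (Fin d) (Fin d) ℝ) (t : ℝ),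
      HasDerivAt (fun s : ℝ => exp (s • A) * B) (exp (t • A) * (A * B)) t := by
    intro B t
    have h := (hasDerivAt_exp_smul_const (𝕂 := ℝ) A t).mul_const B
    rw [mul_assoc] at h
    exact h
  have aux : ∀ (n : ℕ) (B : Matrix (Fin d) (Fin d) ℝ),
      ContDiff ℝ (n : WithTop ℕ∞) (fun t : ℝ => exp (t • A) * B) := by
    intro n
    induction n with
    | zero =>
      intro B
      exact contDiff_zero.mpr (continuous_iff_continuousAt.mpr
        fun t => (hder B t).continuousAt)
    | succ n ih =>
      intro B
      have hcast : ((n + 1 : ℕ) : WithTop ℕ∞) = (n : WithTop ℕ∞) + 1 := by push_cast; rfl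
      rw [hcast, contDiff_succ_iff_deriv]
      refine ⟨fun t => (hder B t).differentiableAt, ?_, ?_⟩
      · intro h; exact absurd h (by exact_mod_cast WithTop.natCast_ne_top n)
      · have hd : deriv (fun s : ℝ => exp (s • A) * B) = fun t => exp (t • A) * (A * B) :=
          funext fun t => (hder B t).deriv
        exact (congrArg (ContDiff ℝ (n : WithTop ℕ∞)) hd).mpr (ih (A * B))
  have hsm : ContDiff ℝ ∞ (fun t : ℝ => exp (t • A)) := by
    have h := contDiff_infty.mpr (fun n => aux n 1)
    simpa using h
  constructor
  · intro i j
    have hL : ContDiff ℝ ∞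
        (LinearMap.toContinuousLinearMap (Matrix.entryLinearMap ℝ ℝ i j) :
          Matrix (Fin d) (Fin d) ℝ → ℝ) := (LinearMap.toContinuousLinearMap _).contDiff
    have h := hL.comp hsm
    exact h
  · intro i j
    funext t
    have hc : Commute A (exp (t • A)) := ((Commute.refl A).smul_right t).exp_right
    have h1 := hder 1 t
    simp only [mul_one] at h1
    have h2 := (ContinuousLinearMap.hasFDerivAt
      (LinearMap.toContinuousLinearMap (Matrix.entryLinearMap ℝ ℝ i j))).comp_hasDerivAt t h1
    have h3 : HasDerivAt (fun s : ℝ => exp (s • A) i j) ((exp (t • A) * A) i j) t := by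
      exact h2
    rw [h3.deriv, Matrix.mul_apply]

lemma expM_mul_neg (A : Matrix (Fin d) (Fin d) ℝ) (t : ℝ) :
    exp (t • A) * exp (t • (-A)) = 1 := by
  letI : SeminormedRing (Matrix (Fin d) (Fin d) ℝ) := Matrix.linftyOpSemiNormedRing
  letI : NormedRing (Matrix (Fin d) (Fin d) ℝ) := Matrix.linftyOpNormedRing
  letI : NormedAlgebra ℝ (Matrix (Fin d) (Fin d) ℝ) := Matrix.linftyOpNormedAlgebra
  rw [smul_neg, ← Matrix.exp_add_of_commute _ _ ((Commute.refl (t • A)).neg_right), add_neg_cancel, exp_zero]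

lemma expM_neg_mul (A : Matrix (Fin d) (Fin d) ℝ) (t : ℝ) :
    exp (t • (-A)) * exp (t • A) = 1 := by
  letI : SeminormedRing (Matrix (Fin d) (Fin d) ℝ) := Matrix.linftyOpSemiNormedRing
  letI : NormedRing (Matrix (Fin d) (Fin d) ℝ) := Matrix.linftyOpNormedRing
  letI : NormedAlgebra ℝ (Matrix (Fin d) (Fin d) ℝ) := Matrix.linftyOpNormedAlgebra
  rw [smul_neg, ← Matrix.exp_add_of_commute _ _ ((Commute.refl (t • A)).neg_left), neg_add_cancel, exp_zero]

end ExpSection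
end DAE
namespace DAE
section UBlock
open NormedSpace

variable {d : ℕ}

lemma TestFun.coe_sum {ι : Type*} (s : Finset ι) (f : ι → TestFun) (t : ℝ) :
    ((∑ k ∈ s, f k : TestFun) : ℝ → ℝ) t = ∑ k ∈ s, (f k : ℝ → ℝ) t := by
  rw [AddSubmonoidClass.coe_finset_sum, Finset.sum_apply]

/-- Multiplication by the `(i,j)` entry of `exp (t A)`. -/
noncomputable def mE (A : Matrix (Fin d) (Fin d) ℝ) (i j : Fin d) : TestFun →ₗ[ℝ] TestFun :=
  mulTF (fun t => exp (t • A) i j) ((expM_entry A).1 i j)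

lemma mE_coe (A : Matrix (Fin d) (Fin d) ℝ) (i j : Fin d) (φ : TestFun) (t : ℝ) :
    (mE A i j φ : ℝ → ℝ) t = exp (t • A) i j * (φ : ℝ → ℝ) t := rfl

lemma mE_tderiv (A : Matrix (Fin d) (Fin d) ℝ) (i j : Fin d) (φ : TestFun) :
    mE A i j (tderiv φ) = tderiv (mE A i j φ) - ∑ k, A k j • mE A i k φ := by
  have h := tderiv_mulTF (fun t => exp (t • A) i j) ((expM_entry A).1 i j) φ
  have h2 : mulTF (deriv fun t => exp (t • A) i j)
      (contDiff_infty_iff_deriv.mp ((expM_entry A).1 i j)).2 φ = ∑ k, A k j • mE A i k φ := by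
    apply Subtype.ext; funext t
    rw [mulTF_coe, TestFun.coe_sum]
    have hd := congrFun ((expM_entry A).2 i j) t
    rw [hd, Finset.sum_mul]
    apply Finset.sum_congr rfl
    intro k _
    rw [SetLike.val_smul, Pi.smul_apply, mE_coe, smul_eq_mul]
    ring
  simp only [mE]
  rw [h, h2]
  simp only [mE]
  abel

lemma mE_cancel (A : Matrix (Fin d) (Fin d) ℝ) (i k : Fin d) (φ : TestFun) :
    ∑ j, mE A j k (mE (-A) i j φ) = if i = k then φ else 0 := by
  apply Subtype.ext; funext t
  rw [TestFun.coe_sum]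
  have : ∀ j, (mE A j k (mE (-A) i j φ) : ℝ → ℝ) t
      = exp (t • (-A)) i j * exp (t • A) j k * (φ : ℝ → ℝ) t := by
    intro j; rw [mE_coe, mE_coe]; ring
  rw [Finset.sum_congr rfl (fun j _ => this j), ← Finset.sum_mul, ← Matrix.mul_apply,
    expM_neg_mul, Matrix.one_apply]
  by_cases h : i = k <;> simp [h]

/-- The twist of a family of distributions by `exp (t A)`. -/
noncomputable def twistE (A : Matrix (Fin d) (Fin d) ℝ) (v : Fin d → DistributionIoi) :
    Fin d → DistributionIoi := fun i => ∑ j, (v j) ∘ₗ mE A i j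

lemma twistE_apply (A : Matrix (Fin d) (Fin d) ℝ) (v : Fin d → DistributionIoi) (i : Fin d)
    (φ : TestFun) : twistE A v i φ = ∑ j, v j (mE A i j φ) := by
  simp [twistE]

lemma untwist (A : Matrix (Fin d) (Fin d) ℝ) (v : Fin d → DistributionIoi) :
    twistE (-A) (twistE A v) = v := by
  funext i
  apply LinearMap.ext; intro φ
  rw [twistE_apply]
  have : ∀ j, twistE A v j (mE (-A) i j φ) = ∑ k, v k (mE A j k (mE (-A) i j φ)) :=
    fun j => twistE_apply A v j _
  rw [Finset.sum_congr rfl (fun j _ => this j), Finset.sum_comm]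
  have h2 : ∀ k, ∑ j, v k (mE A j k (mE (-A) i j φ)) = v k (if i = k then φ else 0) := by
    intro k
    rw [← map_sum, mE_cancel]
  rw [Finset.sum_congr rfl (fun k _ => h2 k)]
  simp [apply_ite, Finset.sum_ite_eq]

/-- Key computation: distributional derivative of the twist. -/
lemma twist_deriv (J : Matrix (Fin d) (Fin d) ℝ) (v : Fin d → DistributionIoi) (j : Fin d)
    (φ : TestFun) :
    -(twistE J v j (tderiv φ)) =
      ∑ k, ( -(v k (tderiv (mE J j k φ))) + ∑ l, J k l * v l (mE J j k φ) ) := by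
  rw [twistE_apply]
  have h1 : ∀ k, v k (mE J j k (tderiv φ))
      = v k (tderiv (mE J j k φ)) - ∑ l, J l k * v k (mE J j l φ) := by
    intro k
    rw [mE_tderiv, map_sub, map_sum]
    congr 1
    exact Finset.sum_congr rfl (fun l _ => by rw [_root_.map_smul, smul_eq_mul])
  rw [Finset.sum_congr rfl (fun k _ => h1 k), Finset.sum_sub_distrib]
  rw [Finset.sum_add_distrib, Finset.sum_neg_distrib]
  have h3 : ∑ k, ∑ l, J l k * v k (mE J j l φ) = ∑ k, ∑ l, J k l * v l (mE J j k φ) :=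
    Finset.sum_comm
  rw [h3]
  ring

end UBlock
end DAE
namespace DAE
section UBlock2
open NormedSpace
open scoped Matrix

variable {d : ℕ}

lemma ode_iff (J : Matrix (Fin d) (Fin d) ℝ) (f₁ v : Fin d → DistributionIoi) :
    (∀ (φ : TestFun) (k : Fin d), -(v k (tderiv φ)) + ∑ l, J k l * v l φ = f₁ k φ) ↔
    (∀ (j : Fin d) (φ : TestFun),
      -(twistE J v j (tderiv φ)) = ∑ k, f₁ k (mE J j k φ)) := by
  constructor
  · intro hode j φ
    rw [twist_deriv]
    exact Finset.sum_congr rfl (fun k _ => hode (mE J j k φ) k)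
  · intro hw φ k
    set rD : Fin d → DistributionIoi :=
      fun k => -((v k).comp tderivL) + (∑ l, J k l • v l) - f₁ k with hrD
    have hrD_apply : ∀ (k : Fin d) (ψ : TestFun),
        rD k ψ = (-(v k (tderiv ψ)) + ∑ l, J k l * v l ψ) - f₁ k ψ := by
      intro k ψ
      simp [hrD, tderivL_apply, smul_eq_mul]
    have hzero : twistE J rD = fun _ => 0 := by
      funext j; apply LinearMap.ext; intro ψ
      rw [twistE_apply, Finset.sum_congr rfl (fun k' _ => hrD_apply k' (mE J j k' ψ)),
        Finset.sum_sub_distrib, ← twist_deriv, hw j ψ]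
      simp
    have huntw := untwist J rD
    rw [hzero] at huntw
    have h0 : rD k φ = 0 := by
      rw [← huntw]
      rw [twistE_apply]
      simp
    rw [hrD_apply] at h0
    linarith

lemma uBlock (J : Matrix (Fin d) (Fin d) ℝ) (f₁ : Fin d → DistributionIoi) (u0 : Fin d → ℝ)
    (φ₀ : TestFun) (hφ₀ : intI φ₀ = 1)
    (hM : IsUnit (Matrix.of fun i j : Fin d => intI (mE (-J) i j φ₀))) :
    ∃! u : Fin d → DistributionIoi,
      (∀ (φ : TestFun) (i : Fin d), -(u i (tderiv φ)) + ∑ j, J i j * u j φ = f₁ i φ) ∧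
      (∀ i, u i φ₀ = u0 i) := by
  set M : Matrix (Fin d) (Fin d) ℝ := Matrix.of fun i j => intI (mE (-J) i j φ₀) with hMdef
  set g : Fin d → DistributionIoi := fun j => ∑ k, (f₁ k) ∘ₗ (mE J j k) with hg
  have hg_apply : ∀ j φ, g j φ = ∑ k, f₁ k (mE J j k φ) := by intro j φ; simp [hg]
  set r : Fin d → ℝ := fun i => ∑ j, g j (Pmap φ₀ hφ₀ (mE (-J) i j φ₀)) with hr
  set c : Fin d → ℝ := (↑hM.unit⁻¹ : Matrix (Fin d) (Fin d) ℝ) *ᵥ (fun i => u0 i + r i) with hc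
  have hMc : M *ᵥ c = fun i => u0 i + r i := by
    rw [hc, Matrix.mulVec_mulVec]
    rw [hM.mul_val_inv, Matrix.one_mulVec]
  set w : Fin d → DistributionIoi := fun j => solveD φ₀ hφ₀ (g j) (c j) with hwdef
  set u : Fin d → DistributionIoi := twistE (-J) w with hu
  have htw : twistE J u = w := by
    rw [hu]
    have h := untwist (-J) w
    rwa [neg_neg] at h
  have hval : ∀ (w' : Fin d → DistributionIoi) (c' : Fin d → ℝ),
      (∀ j, w' j = solveD φ₀ hφ₀ (g j) (c' j)) →
      ∀ i, twistE (-J) w' i φ₀ = (M *ᵥ c') i - r i := by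
    intro w' c' hw' i
    rw [twistE_apply]
    have h1 : ∀ j, w' j (mE (-J) i j φ₀)
        = c' j * intI (mE (-J) i j φ₀) - g j (Pmap φ₀ hφ₀ (mE (-J) i j φ₀)) := by
      intro j; rw [hw' j, solveD_apply]
    rw [Finset.sum_congr rfl (fun j _ => h1 j), Finset.sum_sub_distrib]
    congr 1
    rw [Matrix.mulVec]
    simp only [dotProduct, hMdef, Matrix.of_apply]
    exact Finset.sum_congr rfl (fun j _ => mul_comm _ _)
  refine ⟨u, ⟨?_, ?_⟩, ?_⟩
  · apply (ode_iff J f₁ u).mpr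
    intro j φ
    calc -(twistE J u j (tderiv φ)) = -(w j (tderiv φ)) := by rw [htw]
      _ = g j φ := solveD_deriv φ₀ hφ₀ (g j) (c j) φ
      _ = ∑ k, f₁ k (mE J j k φ) := hg_apply j φ
  · intro i
    have h1 := hval w c (fun j => rfl) i
    rw [hu]
    rw [h1, hMc]
    ring
  · rintro u' ⟨hode', hinit'⟩
    set w' : Fin d → DistributionIoi := twistE J u' with hw'
    have hder' : ∀ j φ, -(w' j (tderiv φ)) = g j φ := by
      intro j φ
      rw [hg_apply]
      exact (ode_iff J f₁ u').mp hode' j φ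
    set c' : Fin d → ℝ := fun j => w' j φ₀ with hc'
    have hsolve' : ∀ j, w' j = solveD φ₀ hφ₀ (g j) (c' j) :=
      fun j => solve_unique φ₀ hφ₀ (g j) (c' j) (w' j) (hder' j) rfl
    have hu' : twistE (-J) w' = u' := by rw [hw']; exact untwist J u'
    have hMc' : M *ᵥ c' = fun i => u0 i + r i := by
      funext i
      have h1 := hval w' c' hsolve' i
      rw [hu'] at h1
      rw [hinit' i] at h1
      linarith [h1]
    have hcc : c' = c := by
      have h2 : (↑hM.unit⁻¹ : Matrix (Fin d) (Fin d) ℝ) * M = 1 := hM.val_inv_mul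
      calc c' = ((↑hM.unit⁻¹ : Matrix (Fin d) (Fin d) ℝ) * M) *ᵥ c' := by
              rw [h2, Matrix.one_mulVec]
        _ = (↑hM.unit⁻¹ : Matrix (Fin d) (Fin d) ℝ) *ᵥ (M *ᵥ c') := by
              rw [Matrix.mulVec_mulVec]
        _ = c := by rw [hMc', hc]
    have hww : w' = w := by
      funext j
      rw [hsolve' j, hcc, hwdef]
    rw [← hu', hww, ← hu]

end UBlock2
end DAE
namespace DAE
section VBlock

variable {q : ℕ}

lemma tderivL_pow_succ (k : ℕ) (φ : TestFun) :
    (tderivL ^ (k + 1)) φ = (tderivL ^ k) (tderiv φ) := by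
  rw [pow_succ]; rfl

lemma tderivL_pow_succ' (k : ℕ) (φ : TestFun) :
    (tderivL ^ (k + 1)) φ = tderiv ((tderivL ^ k) φ) := by
  rw [pow_succ']; rfl

lemma vBlock (N : Matrix (Fin q) (Fin q) ℝ) (hN : IsNilpotent N) (f₂ : Fin q → DistributionIoi) :
    ∃! v : Fin q → DistributionIoi,
      ∀ (φ : TestFun) (j : Fin q),
        (∑ k, N j k * (-(v k (tderiv φ)))) + v j φ = f₂ j φ := by
  obtain ⟨m, hm⟩ := hN
  set v : Fin q → DistributionIoi :=
    fun j => ∑ k ∈ Finset.range m, ∑ l, ((N ^ k) j l) • ((f₂ l) ∘ₗ (tderivL ^ k)) with hv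
  have hv_apply : ∀ j φ, v j φ =
      ∑ k ∈ Finset.range m, ∑ l, (N ^ k) j l * f₂ l ((tderivL ^ k) φ) := by
    intro j φ; simp [hv]
  have hsolv : ∀ (φ : TestFun) (j : Fin q),
      (∑ k, N j k * (-(v k (tderiv φ)))) + v j φ = f₂ j φ := by
    intro φ j
    have hT : ∀ c : Fin q, v c (tderiv φ) =
        ∑ k ∈ Finset.range m, ∑ l, (N ^ k) c l * f₂ l ((tderivL ^ (k + 1)) φ) := by
      intro c
      rw [hv_apply]
      exact Finset.sum_congr rfl fun k _ => Finset.sum_congr rfl fun l _ => by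
        rw [tderivL_pow_succ]
    have h1 : ∑ c, N j c * (-(v c (tderiv φ)))
        = -∑ k ∈ Finset.range m, ∑ l, (N ^ (k + 1)) j l * f₂ l ((tderivL ^ (k + 1)) φ) := by
      have e1 : ∀ c, N j c * (-(v c (tderiv φ)))
          = -∑ k ∈ Finset.range m, ∑ l, N j c * ((N ^ k) c l * f₂ l ((tderivL ^ (k + 1)) φ)) := by
        intro c
        rw [hT c, mul_neg, Finset.mul_sum]
        simp only [Finset.mul_sum]
      rw [Finset.sum_congr rfl fun c _ => e1 c, Finset.sum_neg_distrib]
      congr 1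
      rw [Finset.sum_comm]
      apply Finset.sum_congr rfl; intro k _
      rw [Finset.sum_comm]
      apply Finset.sum_congr rfl; intro l _
      rw [show (N ^ (k + 1)) = N * N ^ k from pow_succ' N k, Matrix.mul_apply, Finset.sum_mul]
      exact Finset.sum_congr rfl fun c _ => by ring
    rw [h1, hv_apply]
    have htel := Finset.sum_range_sub'
      (fun k => ∑ l, (N ^ k) j l * f₂ l ((tderivL ^ k) φ)) m
    rw [Finset.sum_sub_distrib] at htel
    have h0 : ∑ l, (N ^ 0) j l * f₂ l ((tderivL ^ 0) φ) = f₂ j φ := by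
      simp [Matrix.one_apply]
    have hm0 : ∑ l, (N ^ m) j l * f₂ l ((tderivL ^ m) φ) = 0 := by
      simp [hm]
    rw [h0, hm0, sub_zero] at htel
    linarith [htel]
  refine ⟨v, hsolv, ?_⟩
  intro v' hsol'
  set e : Fin q → DistributionIoi := fun k => v' k - v k with he
  have he_apply : ∀ (k : Fin q) (ψ : TestFun), e k ψ = v' k ψ - v k ψ := fun k ψ => rfl
  have hhom : ∀ (φ : TestFun) (j : Fin q), e j φ = ∑ c, N j c * e c (tderiv φ) := by
    intro φ j
    have h1 := hsol' φ j
    have h2 := hsolv φ j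
    have h3 : ∑ c, N j c * e c (tderiv φ)
        = (∑ k, N j k * (-(v k (tderiv φ)))) - (∑ k, N j k * (-(v' k (tderiv φ)))) := by
      rw [← Finset.sum_sub_distrib]
      apply Finset.sum_congr rfl; intro c _
      rw [he_apply]; ring
    rw [he_apply]
    linarith [h1, h2, h3]
  have hiter : ∀ (k : ℕ) (j : Fin q) (φ : TestFun),
      e j φ = ∑ l, (N ^ k) j l * e l ((tderivL ^ k) φ) := by
    intro k
    induction k with
    | zero => intro j φ; simp [Matrix.one_apply]
    | succ k ih =>
      intro j φ
      rw [ih j φ]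
      have hstep : ∀ l, e l ((tderivL ^ k) φ) = ∑ c, N l c * e c ((tderivL ^ (k + 1)) φ) := by
        intro l
        rw [tderivL_pow_succ']
        exact hhom ((tderivL ^ k) φ) l
      rw [Finset.sum_congr rfl fun l _ => by rw [hstep l, Finset.mul_sum]]
      rw [Finset.sum_comm]
      apply Finset.sum_congr rfl; intro c _
      rw [show (N ^ (k + 1)) = N ^ k * N from pow_succ N k, Matrix.mul_apply, Finset.sum_mul]
      exact Finset.sum_congr rfl fun l _ => by ring
  funext j
  apply LinearMap.ext; intro φ
  have h6 := hiter m j φ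
  rw [hm] at h6
  simp only [Matrix.zero_apply, zero_mul, Finset.sum_const_zero] at h6
  have h5 : v' j φ - v j φ = 0 := h6
  linarith [h5]

end VBlock
end DAE
namespace DAE

lemma solves_decomp {d q : ℕ} (J : Matrix (Fin d) (Fin d) ℝ) (N : Matrix (Fin q) (Fin q) ℝ)
    (f y : Fin (d + q) → DistributionIoi) :
    SolvesDAE
        (Matrix.reindex finSumFinEquiv finSumFinEquiv
          (Matrix.fromBlocks (1 : Matrix (Fin d) (Fin d) ℝ) 0 0 N))
        (Matrix.reindex finSumFinEquiv finSumFinEquiv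
          (Matrix.fromBlocks J 0 0 (1 : Matrix (Fin q) (Fin q) ℝ)))
        f y ↔
      ((∀ (φ : TestFun) (i : Fin d),
          -(y (Fin.castAdd q i) (tderiv φ)) + ∑ j, J i j * y (Fin.castAdd q j) φ
            = f (Fin.castAdd q i) φ) ∧
       (∀ (φ : TestFun) (j : Fin q),
          (∑ k, N j k * (-(y (Fin.natAdd d k) (tderiv φ)))) + y (Fin.natAdd d j) φ
            = f (Fin.natAdd d j) φ)) := by
  unfold SolvesDAE
  constructor
  · intro h
    refine ⟨fun φ i => ?_, fun φ j => ?_⟩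
    · have h1 := congrFun (h φ) (finSumFinEquiv (Sum.inl i))
      simpa [Matrix.reindex_apply, Matrix.submatrix_mulVec_equiv, Matrix.fromBlocks_mulVec,
        Matrix.one_mulVec, Matrix.zero_mulVec, Matrix.mulVec, dotProduct,
        finSumFinEquiv_apply_left, finSumFinEquiv_apply_right, Function.comp] using h1
    · have h1 := congrFun (h φ) (finSumFinEquiv (Sum.inr j))
      simpa [Matrix.reindex_apply, Matrix.submatrix_mulVec_equiv, Matrix.fromBlocks_mulVec,
        Matrix.one_mulVec, Matrix.zero_mulVec, Matrix.mulVec, dotProduct,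
        finSumFinEquiv_apply_left, finSumFinEquiv_apply_right, Function.comp] using h1
  · rintro ⟨hu, hv⟩ φ
    funext i'
    obtain ⟨s, rfl⟩ : ∃ s, finSumFinEquiv s = i' := ⟨finSumFinEquiv.symm i', by simp⟩
    cases s with
    | inl i =>
      have h1 := hu φ i
      simpa [Matrix.reindex_apply, Matrix.submatrix_mulVec_equiv, Matrix.fromBlocks_mulVec,
        Matrix.one_mulVec, Matrix.zero_mulVec, Matrix.mulVec, dotProduct,
        finSumFinEquiv_apply_left, finSumFinEquiv_apply_right, Function.comp] using h1
    | inr j =>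
      have h1 := hv φ j
      simpa [Matrix.reindex_apply, Matrix.submatrix_mulVec_equiv, Matrix.fromBlocks_mulVec,
        Matrix.one_mulVec, Matrix.zero_mulVec, Matrix.mulVec, dotProduct,
        finSumFinEquiv_apply_left, finSumFinEquiv_apply_right, Function.comp] using h1

end DAE

theorem KCF_DAE_exists_unique' {d q : ℕ} (J : Matrix (Fin d) (Fin d) ℝ)
    (N : Matrix (Fin q) (Fin q) ℝ) (hN : IsNilpotent N)
    (f : Fin (d + q) → DistributionIoi) (u0 : Fin d → ℝ) (φ₀ : TestFun)
    (hφ₀ : ∫ t in Set.Ioi (0 : ℝ), φ₀.1 t = 1)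
    (hM : IsUnit (Matrix.of fun i j : Fin d =>
      ∫ t in Set.Ioi (0 : ℝ), (NormedSpace.exp (-(t • J))) i j * φ₀.1 t)) :
    ∃! y : Fin (d + q) → DistributionIoi,
      SolvesDAE
        (Matrix.reindex finSumFinEquiv finSumFinEquiv
          (Matrix.fromBlocks (1 : Matrix (Fin d) (Fin d) ℝ) 0 0 N))
        (Matrix.reindex finSumFinEquiv finSumFinEquiv
          (Matrix.fromBlocks J 0 0 (1 : Matrix (Fin q) (Fin q) ℝ)))
        f y ∧
      ∀ i : Fin d, y (Fin.castAdd q i) φ₀ = u0 i := by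
  classical
  have hφ₀' : DAE.intI φ₀ = 1 := hφ₀
  have hM' : IsUnit (Matrix.of fun i j : Fin d => DAE.intI (DAE.mE (-J) i j φ₀)) := by
    have heq : (Matrix.of fun i j : Fin d => DAE.intI (DAE.mE (-J) i j φ₀))
        = Matrix.of fun i j : Fin d =>
            ∫ t in Set.Ioi (0 : ℝ), (NormedSpace.exp (-(t • J))) i j * φ₀.1 t := by
      ext i j
      simp only [Matrix.of_apply, DAE.intI_apply, DAE.mE_coe, smul_neg]
    rw [heq]
    exact hM
  obtain ⟨u, ⟨huode, huinit⟩, huniq⟩ :=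
    DAE.uBlock J (fun i => f (Fin.castAdd q i)) u0 φ₀ hφ₀' hM'
  obtain ⟨v, hvode, hvuniq⟩ := DAE.vBlock N hN (fun j => f (Fin.natAdd d j))
  set y : Fin (d + q) → DistributionIoi := fun i' => Sum.elim u v (finSumFinEquiv.symm i') with hy
  have hyu : ∀ i : Fin d, y (Fin.castAdd q i) = u i := by
    intro i; simp [hy]
  have hyv : ∀ j : Fin q, y (Fin.natAdd d j) = v j := by
    intro j; simp [hy]
  refine ⟨y, ⟨?_, ?_⟩, ?_⟩
  · rw [DAE.solves_decomp]
    constructor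
    · intro φ i
      rw [hyu i]
      rw [Finset.sum_congr rfl (fun j _ => by rw [hyu j])]
      exact huode φ i
    · intro φ j
      rw [hyv j]
      rw [Finset.sum_congr rfl (fun k _ => by rw [hyv k])]
      exact hvode φ j
  · intro i
    rw [hyu i]
    exact huinit i
  · rintro y' ⟨hsol', hinit'⟩
    rw [DAE.solves_decomp] at hsol'
    have hu' : (fun i => y' (Fin.castAdd q i)) = u := by
      apply huniq
      exact ⟨hsol'.1, hinit'⟩
    have hv' : (fun j => y' (Fin.natAdd d j)) = v := by
      apply hvuniq
      exact hsol'.2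
    funext i'
    obtain ⟨s, rfl⟩ : ∃ s, finSumFinEquiv s = i' := ⟨finSumFinEquiv.symm i', by simp⟩
    cases s with
    | inl i =>
      rw [finSumFinEquiv_apply_left, hyu i, ← congrFun hu' i]
    | inr j =>
      rw [finSumFinEquiv_apply_right, hyv j, ← congrFun hv' j]

/-- Existence and uniqueness of the distributional solution of a DAE in Kronecker
canonical form `blockdiag(I_d, N) ẏ + blockdiag(J, I_q) y = f` with `N` nilpotent,
subject to the initial condition `⟨y_i, φ₀⟩ = u⁰_i`, `i = 1,…,d`, provided
`∫₀^∞ e^{-Jt} φ₀(t) dt` is invertible. -/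
theorem KCF_DAE_exists_unique {d q : ℕ} (J : Matrix (Fin d) (Fin d) ℝ)
    (N : Matrix (Fin q) (Fin q) ℝ) (hN : IsNilpotent N)
    (f : Fin (d + q) → DistributionIoi) (u0 : Fin d → ℝ) (φ₀ : TestFun)
    (hφ₀ : ∫ t in Set.Ioi (0 : ℝ), φ₀.1 t = 1)
    (hM : IsUnit (Matrix.of fun i j : Fin d =>
      ∫ t in Set.Ioi (0 : ℝ), (NormedSpace.exp (-(t • J))) i j * φ₀.1 t)) :
    ∃! y : Fin (d + q) → DistributionIoi,
      SolvesDAE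
        (Matrix.reindex finSumFinEquiv finSumFinEquiv
          (Matrix.fromBlocks (1 : Matrix (Fin d) (Fin d) ℝ) 0 0 N))
        (Matrix.reindex finSumFinEquiv finSumFinEquiv
          (Matrix.fromBlocks J 0 0 (1 : Matrix (Fin q) (Fin q) ℝ)))
        f y ∧
      ∀ i : Fin d, y (Fin.castAdd q i) φ₀ = u0 i := by
  exact KCF_DAE_exists_unique' J N hN f u0 φ₀ hφ₀ hM
end

section
/- Let φ : ℝ → ℝ be smooth with compact support and φ not identically zero. Then for every natural number k the strict inequality ‖φ^{(k+1)}‖² < ‖φ^{(k)}‖ · ‖φ^{(k+2)}‖ holds; equivalently, the sequence of ratios ‖φ^{(k)}‖/‖φ^{(k+1)}‖ is strictly decreasing in k. -/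
open MeasureTheory
open scoped ContDiff

section Aux

lemma aux_one_le_inf : (1 : WithTop ℕ∞) ≤ ∞ := by
  exact_mod_cast (le_top : (1 : ℕ∞) ≤ ⊤)

lemma aux_hcs_iter {g : ℝ → ℝ} (h : HasCompactSupport g) :
    ∀ n : ℕ, HasCompactSupport (deriv^[n] g)
  | 0 => h
  | n + 1 => by
    rw [Function.iterate_succ_apply']
    exact (aux_hcs_iter h n).deriv

/-- Product of a continuous compactly supported function and a continuous function
is integrable. -/
lemma aux_int_mul {g h : ℝ → ℝ} (hg : Continuous g) (hh : Continuous h)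
    (hcg : HasCompactSupport g) : Integrable (fun t => g t * h t) :=
  (hg.mul hh).integrable_of_hasCompactSupport hcg.mul_right

/-- A continuous compactly supported function with zero integral of its square is zero. -/
lemma aux_sq_int_zero {g : ℝ → ℝ} (hg : Continuous g)
    (hint : Integrable (fun t : ℝ => g t ^ 2))
    (h : (∫ t : ℝ, g t ^ 2) = 0) : g = 0 := by
  have hae : (fun t : ℝ => g t ^ 2) =ᵐ[volume] 0 :=
    (integral_eq_zero_iff_of_nonneg (fun t => sq_nonneg (g t)) hint).mp h
  have heq : (fun t : ℝ => g t ^ 2) = 0 :=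
    (Continuous.ae_eq_iff_eq volume (hg.pow 2) continuous_const).mp hae
  funext t
  have := congrFun heq t
  simpa using pow_eq_zero_iff (n := 2) (by norm_num) |>.mp this

/-- Positivity of ∫ g² for nonzero continuous compactly supported g. -/
lemma aux_sq_int_pos {g : ℝ → ℝ} (hg : Continuous g) (hcg : HasCompactSupport g)
    (hne : g ≠ 0) : 0 < ∫ t : ℝ, g t ^ 2 := by
  rcases lt_or_eq_of_le (integral_nonneg (f := fun t => g t ^ 2) (fun t => sq_nonneg (g t))) with h | h
  · exact h
  · have hint : Integrable (fun t : ℝ => g t ^ 2) := by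
      simpa [pow_two] using aux_int_mul hg hg hcg
    exact absurd (aux_sq_int_zero hg hint h.symm) hne

/-- A differentiable compactly supported function with zero derivative is zero. -/
lemma aux_const_zero {g : ℝ → ℝ} (hg : Differentiable ℝ g) (hcg : HasCompactSupport g)
    (h : deriv g = 0) : g = 0 := by
  obtain ⟨t₀, ht₀⟩ := Set.ne_univ_iff_exists_notMem _ |>.mp hcg.isCompact.ne_univ
  funext t
  have := is_const_of_deriv_eq_zero hg (fun x => congrFun h x) t t₀
  simpa [image_eq_zero_of_notMem_tsupport ht₀] using this

/-- No iterated derivative of a nonzero smooth compactly supported function vanishes. -/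
lemma aux_iter_ne {φ : ℝ → ℝ} (hφ : ContDiff ℝ ∞ φ) (hsupp : HasCompactSupport φ)
    (hne : φ ≠ 0) : ∀ m : ℕ, deriv^[m] φ ≠ 0 := by
  intro m
  induction m with
  | zero => simpa using hne
  | succ n ih =>
    intro h
    rw [Function.iterate_succ_apply'] at h
    exact ih (aux_const_zero ((hφ.iterate_deriv n).differentiable (by simp))
      (aux_hcs_iter hsupp n) h)

/-- Integration by parts on ℝ for smooth compactly supported functions. -/
lemma aux_ibp {u v : ℝ → ℝ} (hu : ContDiff ℝ ∞ u) (hv : ContDiff ℝ ∞ v)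
    (hsu : HasCompactSupport u) :
    (∫ t : ℝ, deriv u t * v t) = -∫ t : ℝ, u t * deriv v t := by
  set w : ℝ → ℝ := fun t => u t * v t with hw
  have hwc : ContDiff ℝ ∞ w := hu.mul hv
  have hws : HasCompactSupport w := hsu.mul_right
  have hderw : ∀ t, deriv w t = deriv u t * v t + u t * deriv v t := fun t =>
    deriv_mul (hu.differentiable (by simp) t) (hv.differentiable (by simp) t)
  have hcontw : Continuous (deriv w) := hwc.continuous_deriv aux_one_le_inf
  have hintw : Integrable (deriv w) :=
    hcontw.integrable_of_hasCompactSupport hws.deriv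
  have h0 : (∫ t : ℝ, deriv w t) = 0 := by
    have h1 : (∫ t in Set.Iic (0:ℝ), deriv w t) = w 0 :=
      HasCompactSupport.integral_Iic_deriv_eq (hwc.of_le aux_one_le_inf) hws 0
    have h2 : (∫ t in Set.Ioi (0:ℝ), deriv w t) = -w 0 :=
      HasCompactSupport.integral_Ioi_deriv_eq (hwc.of_le aux_one_le_inf) hws 0
    rw [← intervalIntegral.integral_Iic_add_Ioi hintw.integrableOn hintw.integrableOn, h1, h2]
    ring
  have hcu' : Continuous (deriv u) := hu.continuous_deriv aux_one_le_inf
  have hcv' : Continuous (deriv v) := hv.continuous_deriv aux_one_le_inf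
  have hi1 : Integrable (fun t : ℝ => deriv u t * v t) := by
    have := aux_int_mul hcu' (hv.continuous) hsu.deriv
    exact this
  have hi2 : Integrable (fun t : ℝ => u t * deriv v t) :=
    aux_int_mul hu.continuous hcv' hsu
  have : (∫ t : ℝ, (deriv u t * v t + u t * deriv v t)) = 0 := by
    rw [← h0]; congr 1; funext t; exact (hderw t).symm
  rw [integral_add hi1 hi2] at this
  linarith

/-- Energy argument: a smooth compactly supported solution of f'' = c f with c < 0 is zero. -/
lemma aux_energy {f : ℝ → ℝ} (hf : ContDiff ℝ ∞ f) (hs : HasCompactSupport f)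
    {c : ℝ} (hc : c < 0) (hode : ∀ t, deriv (deriv f) t = c * f t) : f = 0 := by
  have hdf : Differentiable ℝ f := hf.differentiable (by simp)
  have hf' : ContDiff ℝ ∞ (deriv f) := (contDiff_infty_iff_deriv.mp hf).2
  have hdf' : Differentiable ℝ (deriv f) := hf'.differentiable (by simp)
  set E : ℝ → ℝ := fun t => (deriv f t) ^ 2 - c * f t ^ 2 with hE
  have hEderiv : ∀ t, HasDerivAt E 0 t := by
    intro t
    have h1 : HasDerivAt f (deriv f t) t := (hdf t).hasDerivAt
    have h2 : HasDerivAt (deriv f) (c * f t) t := by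
      have := (hdf' t).hasDerivAt
      rwa [hode t] at this
    have := ((h2.mul h2).sub ((h1.mul h1).const_mul c))
    have hfun : E = (deriv f * deriv f - fun y => c * (f * f) y) := by
      funext s; simp [hE, pow_two]
    rw [hfun]
    exact this.congr_deriv (by ring)
  have hEdiff : Differentiable ℝ E := fun t => (hEderiv t).differentiableAt
  have hEd0 : ∀ t, deriv E t = 0 := fun t => (hEderiv t).deriv
  obtain ⟨t₀, ht₀⟩ := Set.ne_univ_iff_exists_notMem _ |>.mp
    (hs.union hs.deriv).ne_univ
  have ht₀f : f t₀ = 0 := image_eq_zero_of_notMem_tsupport (fun h => ht₀ (Set.mem_union_left _ h))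
  have ht₀f' : deriv f t₀ = 0 :=
    image_eq_zero_of_notMem_tsupport (fun h => ht₀ (Set.mem_union_right _ h))
  funext t
  have hconst := is_const_of_deriv_eq_zero hEdiff hEd0 t t₀
  have hEt : E t = 0 := by
    rw [hconst]; simp [hE, ht₀f, ht₀f']
  have h1 : (deriv f t) ^ 2 = c * f t ^ 2 := by
    have : (deriv f t) ^ 2 - c * f t ^ 2 = 0 := hEt
    linarith
  have h2 : f t ^ 2 = 0 := by nlinarith [sq_nonneg (deriv f t), sq_nonneg (f t)]
  simpa using pow_eq_zero_iff (n := 2) (by norm_num) |>.mp h2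

end Aux

/-- For a smooth compactly supported `φ : ℝ → ℝ`, not identically zero, the chain of strict
inequalities `‖φ⁽ᵏ⁺¹⁾‖² < ‖φ⁽ᵏ⁾‖ ‖φ⁽ᵏ⁺²⁾‖` holds; equivalently, the ratios
`‖φ⁽ᵏ⁾‖ / ‖φ⁽ᵏ⁺¹⁾‖` are strictly decreasing in `k`.  Here `‖g‖ = (∫ g²)^{1/2}`. -/
theorem norm_iteratedDeriv_sq_lt (φ : ℝ → ℝ)
    (hφ : ContDiff ℝ ∞ φ) (hsupp : HasCompactSupport φ) (hne : φ ≠ 0) (k : ℕ) :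
    (∫ t : ℝ, (deriv^[k + 1] φ t) ^ 2) <
      Real.sqrt (∫ t : ℝ, (deriv^[k] φ t) ^ 2) *
        Real.sqrt (∫ t : ℝ, (deriv^[k + 2] φ t) ^ 2) ∧
    Real.sqrt (∫ t : ℝ, (deriv^[k + 1] φ t) ^ 2) /
        Real.sqrt (∫ t : ℝ, (deriv^[k + 2] φ t) ^ 2) <
      Real.sqrt (∫ t : ℝ, (deriv^[k] φ t) ^ 2) /
        Real.sqrt (∫ t : ℝ, (deriv^[k + 1] φ t) ^ 2) := by
  set f : ℝ → ℝ := deriv^[k] φ with hfdef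
  have hf : ContDiff ℝ ∞ f := hφ.iterate_deriv k
  have hfs : HasCompactSupport f := aux_hcs_iter hsupp k
  have hfne : f ≠ 0 := aux_iter_ne hφ hsupp hne k
  have hf1eq : deriv^[k+1] φ = deriv f := by
    rw [Function.iterate_succ_apply']
  have hf2eq : deriv^[k+2] φ = deriv (deriv f) := by
    show deriv^[(k+1)+1] φ = _
    rw [Function.iterate_succ_apply', hf1eq]
  have hf1 : ContDiff ℝ ∞ (deriv f) := (contDiff_infty_iff_deriv.mp hf).2
  have hf1s : HasCompactSupport (deriv f) := hfs.deriv
  have hf2 : ContDiff ℝ ∞ (deriv (deriv f)) := (contDiff_infty_iff_deriv.mp hf1).2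
  have hf2s : HasCompactSupport (deriv (deriv f)) := hf1s.deriv
  have hf1ne : deriv f ≠ 0 := by
    rw [← hf1eq]; exact aux_iter_ne hφ hsupp hne (k+1)
  have hf2ne : deriv (deriv f) ≠ 0 := by
    rw [← hf2eq]; exact aux_iter_ne hφ hsupp hne (k+2)
  rw [hf1eq, hf2eq]
  set A : ℝ := ∫ t : ℝ, f t ^ 2 with hAdef
  set B : ℝ := ∫ t : ℝ, (deriv f t) ^ 2 with hBdef
  set C : ℝ := ∫ t : ℝ, (deriv (deriv f) t) ^ 2 with hCdef
  have hA : 0 < A := aux_sq_int_pos hf.continuous hfs hfne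
  have hB : 0 < B := aux_sq_int_pos hf1.continuous hf1s hf1ne
  have hC : 0 < C := aux_sq_int_pos hf2.continuous hf2s hf2ne
  -- integration by parts: B = -∫ f f''
  have hibp : B = -∫ t : ℝ, f t * deriv (deriv f) t := by
    have := aux_ibp hf hf1 hfs
    rw [hBdef]
    simpa [pow_two] using this
  have hff2 : (∫ t : ℝ, f t * deriv (deriv f) t) = -B := by linarith
  -- main strict inequality
  have hmain : B < Real.sqrt A * Real.sqrt C := by
    by_contra hcon
    push_neg at hcon
    have hAC : A * C ≤ B ^ 2 := by
      have h1 : Real.sqrt A * Real.sqrt C ≤ B := hcon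
      have h2 : (Real.sqrt A * Real.sqrt C) ^ 2 = A * C := by
        rw [mul_pow, Real.sq_sqrt hA.le, Real.sq_sqrt hC.le]
      calc A * C = (Real.sqrt A * Real.sqrt C) ^ 2 := h2.symm
        _ ≤ B ^ 2 := pow_le_pow_left₀
            (mul_nonneg (Real.sqrt_nonneg A) (Real.sqrt_nonneg C)) h1 2
    set c : ℝ := -(B / A) with hcdef
    have hc : c < 0 := by
      rw [hcdef]; exact neg_neg_iff_pos.mpr (div_pos hB hA)
    -- ∫ (f'' - c f)² ≤ 0
    have hint1 : Integrable (fun t : ℝ => f t * deriv (deriv f) t) :=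
      aux_int_mul hf.continuous hf2.continuous hfs
    have hint2 : Integrable (fun t : ℝ => f t ^ 2) := by
      simpa [pow_two] using aux_int_mul hf.continuous hf.continuous hfs
    have hint3 : Integrable (fun t : ℝ => (deriv (deriv f) t) ^ 2) := by
      simpa [pow_two] using aux_int_mul hf2.continuous hf2.continuous hf2s
    have heq : (fun t : ℝ => (deriv (deriv f) t - c * f t) ^ 2)
        = fun t : ℝ => (deriv (deriv f) t) ^ 2 - (2 * c) * (f t * deriv (deriv f) t)
          + c ^ 2 * (f t ^ 2) := by
      funext t; ring
    have hexpand : (∫ t : ℝ, (deriv (deriv f) t - c * f t) ^ 2)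
        = C - 2 * c * (∫ t : ℝ, f t * deriv (deriv f) t) + c ^ 2 * A := by
      rw [show (fun t : ℝ => (deriv (deriv f) t - c * f t) ^ 2)
          = fun t : ℝ => (deriv (deriv f) t) ^ 2 - (2 * c) * (f t * deriv (deriv f) t)
            + c ^ 2 * (f t ^ 2) from heq]
      rw [integral_add (by exact (hint3.sub (hint1.const_mul _))) (hint2.const_mul _),
        integral_sub hint3 (hint1.const_mul _), integral_const_mul, integral_const_mul]
    have hle : (∫ t : ℝ, (deriv (deriv f) t - c * f t) ^ 2) ≤ 0 := by
      rw [hexpand, hff2, hcdef]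
      have : C - 2 * (-(B / A)) * (-B) + (-(B / A)) ^ 2 * A = C - B ^ 2 / A := by
        field_simp; ring
      rw [this]
      rw [sub_nonpos, le_div_iff₀ hA]
      linarith
    have hge : 0 ≤ (∫ t : ℝ, (deriv (deriv f) t - c * f t) ^ 2) :=
      integral_nonneg (fun t => sq_nonneg _)
    have hzero : (∫ t : ℝ, (deriv (deriv f) t - c * f t) ^ 2) = 0 := le_antisymm hle hge
    have hintg : Integrable (fun t : ℝ => (deriv (deriv f) t - c * f t) ^ 2) := by
      rw [heq]
      exact (hint3.sub (hint1.const_mul _)).add (hint2.const_mul _)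
    have hg0 : (fun t : ℝ => deriv (deriv f) t - c * f t) = 0 :=
      aux_sq_int_zero (hf2.continuous.sub (continuous_const.mul hf.continuous))
        hintg hzero
    have hode : ∀ t, deriv (deriv f) t = c * f t := by
      intro t
      have := congrFun hg0 t
      simp only [Pi.zero_apply] at this
      linarith
    exact hfne (aux_energy hf hfs hc hode)
  refine ⟨hmain, ?_⟩
  rw [div_lt_div_iff₀ (Real.sqrt_pos.mpr hC) (Real.sqrt_pos.mpr hB)]
  have hBB : Real.sqrt B * Real.sqrt B = B := Real.mul_self_sqrt hB.le
  linarith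
end

section
/- Let ρ₁, …, ρ_q ∈ ℝ^m (viewed as row vectors), not all zero, and let r be the greatest index with ρ_r ≠ 0. Then the q×(m·q) block matrix H whose (i,j)-th m-dimensional row block (for i, j = 1,…,q) equals ρ_{i+j−1} when i + j − 1 ≤ q and equals the zero row vector otherwise — that is, H has rows (ρ_i, ρ_{i+1}, …, ρ_q, 0, …, 0) for i = 1,…,q — has rank exactly r. Consequently, the linear map ℝ^{mq} → ℝ^q given by H is onto ℝ^r × {0}^{q−r}. -/
/-- Let `ρ 0, …, ρ (q-1) ∈ ℝ^m` be row vectors, not all zero, and let `r` be the greatest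
index with `ρ r ≠ 0`.  The `q × (m q)` block-Hankel matrix `H` with `(i,j)`-th row block
`ρ (i+j)` (when `i + j < q`, and `0` otherwise) has rank `r + 1` (i.e. the number of
nonzero rows `ρ`), and the associated linear map `ℝ^{mq} → ℝ^q` maps onto the subspace of
vectors whose coordinates past `r` all vanish. -/
theorem hankel_block_matrix_rank_and_range {q m : ℕ} (ρ : Fin q → Fin m → ℝ)
    (r : Fin q) (hr : ρ r ≠ 0) (hmax : ∀ k : Fin q, r < k → ρ k = 0) :
    (Matrix.of fun (i : Fin q) (jl : Fin q × Fin m) =>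
        if h : (i : ℕ) + (jl.1 : ℕ) < q then ρ ⟨(i : ℕ) + (jl.1 : ℕ), h⟩ jl.2 else 0).rank
      = (r : ℕ) + 1 ∧
    Set.range (Matrix.of fun (i : Fin q) (jl : Fin q × Fin m) =>
        if h : (i : ℕ) + (jl.1 : ℕ) < q then ρ ⟨(i : ℕ) + (jl.1 : ℕ), h⟩ jl.2 else 0).mulVec
      = {y : Fin q → ℝ | ∀ i : Fin q, r < i → y i = 0} := by
  set M : Matrix (Fin q) (Fin q × Fin m) ℝ :=
    Matrix.of fun (i : Fin q) (jl : Fin q × Fin m) =>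
        if h : (i : ℕ) + (jl.1 : ℕ) < q then ρ ⟨(i : ℕ) + (jl.1 : ℕ), h⟩ jl.2 else 0 with hM
  obtain ⟨l₀, hc⟩ := Function.ne_iff.mp hr
  simp only [Pi.zero_apply] at hc
  -- key fact: each row past `r` vanishes, so the image vanishes past `r`
  have lemA : ∀ (x : Fin q × Fin m → ℝ) (i : Fin q), r < i → M.mulVec x i = 0 := by
    intro x i hi
    rw [Matrix.mulVec]
    apply Finset.sum_eq_zero
    intro jl _
    have : M i jl = 0 := by
      simp only [hM, Matrix.of_apply]
      split
      · next h =>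
        have : r < (⟨(i : ℕ) + (jl.1 : ℕ), h⟩ : Fin q) := by
          rw [Fin.lt_def] at hi ⊢; simpa using Nat.lt_of_lt_of_le hi (Nat.le_add_right _ _)
        rw [hmax _ this]; rfl
      · rfl
    simp [dotProduct, this]
  -- each standard basis vector `e_i`, `i ≤ r`, lies in the range
  have lemB : ∀ n : ℕ, ∀ i : Fin q, (i : ℕ) = n → i ≤ r →
      (Pi.single i (1 : ℝ) : Fin q → ℝ) ∈ LinearMap.range M.mulVecLin := by
    intro n
    induction n using Nat.strong_induction_on with
    | _ n IH =>
      intro i hin hir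
      have hir' : (i : ℕ) ≤ (r : ℕ) := hir
      set j₀ : Fin q := ⟨(r : ℕ) - (i : ℕ), by omega⟩ with hj₀
      set v : Fin q → ℝ := M.mulVec (Pi.single (j₀, l₀) 1) with hv
      have hvmem : v ∈ LinearMap.range M.mulVecLin := ⟨_, (Matrix.mulVecLin_apply _ _)⟩
      have hvk : ∀ k : Fin q, v k = M k (j₀, l₀) := by
        intro k; rw [hv, Matrix.mulVec_single]; simp
      have hvi : v i = ρ r l₀ := by
        rw [hvk]
        simp only [hM, Matrix.of_apply]
        have h : (i : ℕ) + (j₀ : ℕ) < q := by simp [hj₀]; omega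
        rw [dif_pos h]
        congr 1
        exact Fin.ext (by simp [hj₀]; omega)
      have hvgt : ∀ k : Fin q, i < k → v k = 0 := by
        intro k hk
        rw [hvk]
        simp only [hM, Matrix.of_apply]
        split
        · next h =>
          have : r < (⟨(k : ℕ) + (j₀ : ℕ), h⟩ : Fin q) := by
            rw [Fin.lt_def]; simp [hj₀]; rw [Fin.lt_def] at hk; omega
          rw [hmax _ this]; rfl
        · rfl
      -- e_i = c⁻¹ • (v - ∑_{k < i} v k • e_k)
      have key : (Pi.single i (1 : ℝ) : Fin q → ℝ) =
          (ρ r l₀)⁻¹ • (v - ∑ k ∈ Finset.Iio i, v k • (Pi.single k (1 : ℝ) : Fin q → ℝ)) := by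
        funext k'
        simp only [Pi.smul_apply, Pi.sub_apply, Finset.sum_apply, Pi.smul_apply,
          Pi.single_apply, smul_eq_mul, mul_ite, mul_one, mul_zero]
        rw [Finset.sum_ite_eq (Finset.Iio i) k' v]
        rcases lt_trichotomy k' i with h | h | h
        · simp [Finset.mem_Iio, h, Fin.ne_of_lt h]
        · subst h
          simp [Finset.mem_Iio, hvi, inv_mul_cancel₀ hc]
        · simp [Finset.mem_Iio, not_lt_of_gt h, Fin.ne_of_gt h, hvgt k' h]
      rw [key]
      refine Submodule.smul_mem _ _ (Submodule.sub_mem _ hvmem (Submodule.sum_mem _ ?_))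
      intro k hk
      rw [Finset.mem_Iio] at hk
      exact Submodule.smul_mem _ _
        (IH (k : ℕ) (by rw [← hin]; exact hk) k rfl (le_of_lt (lt_of_lt_of_le hk hir)))
  -- every vector vanishing past r is in the range
  have lemC : ∀ y : Fin q → ℝ, (∀ i : Fin q, r < i → y i = 0) →
      y ∈ LinearMap.range M.mulVecLin := by
    intro y hy
    have hy' : y = ∑ i : Fin q, y i • (Pi.single i (1 : ℝ) : Fin q → ℝ) := by
      funext k'
      simp only [Finset.sum_apply, Pi.smul_apply, Pi.single_apply, smul_eq_mul, mul_ite,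
        mul_one, mul_zero]
      rw [Finset.sum_ite_eq Finset.univ k' y]
      simp
    rw [hy']
    refine Submodule.sum_mem _ fun i _ => ?_
    rcases le_or_gt i r with h | h
    · exact Submodule.smul_mem _ _ (lemB (i : ℕ) i rfl h)
    · rw [hy i h, zero_smul]; exact Submodule.zero_mem _
  have hrange : Set.range M.mulVec = {y : Fin q → ℝ | ∀ i : Fin q, r < i → y i = 0} := by
    ext y
    constructor
    · rintro ⟨x, rfl⟩ i hi
      exact lemA x i hi
    · intro hy
      obtain ⟨x, hx⟩ := lemC y hy
      exact ⟨x, by rwa [Matrix.mulVecLin_apply] at hx⟩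
  refine ⟨?_, hrange⟩
  -- rank computation
  have hemb : Function.Injective (fun i : Fin ((r : ℕ) + 1) => (⟨(i : ℕ), by omega⟩ : Fin q)) := by
    intro a b hab
    have : ((⟨(a : ℕ), by omega⟩ : Fin q) : ℕ) = ((⟨(b : ℕ), by omega⟩ : Fin q) : ℕ) :=
      congrArg Fin.val hab
    exact Fin.ext this
  have hli : LinearIndependent ℝ
      (fun i : Fin ((r : ℕ) + 1) => (Pi.single (⟨(i : ℕ), by omega⟩ : Fin q) (1 : ℝ) : Fin q → ℝ)) := by
    have := (Pi.basisFun ℝ (Fin q)).linearIndependent.comp _ hemb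
    convert this using 1
    funext i
    rw [Function.comp_apply, Pi.basisFun_apply]
  have hspan : LinearMap.range M.mulVecLin = Submodule.span ℝ
      (Set.range fun i : Fin ((r : ℕ) + 1) => (Pi.single (⟨(i : ℕ), by omega⟩ : Fin q) (1 : ℝ) : Fin q → ℝ)) := by
    apply le_antisymm
    · rintro y ⟨x, rfl⟩
      rw [Matrix.mulVecLin_apply]
      have hy : ∀ i : Fin q, r < i → M.mulVec x i = 0 := fun i hi => lemA x i hi
      have : M.mulVec x = ∑ i : Fin q, M.mulVec x i • (Pi.single i (1 : ℝ) : Fin q → ℝ) := by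
        funext k'
        simp only [Finset.sum_apply, Pi.smul_apply, Pi.single_apply, smul_eq_mul, mul_ite,
          mul_one, mul_zero]
        rw [Finset.sum_ite_eq Finset.univ k' (M.mulVec x)]
        simp
      rw [this]
      refine Submodule.sum_mem _ fun i _ => ?_
      rcases le_or_gt i r with h | h
      · refine Submodule.smul_mem _ _ (Submodule.subset_span ?_)
        refine ⟨⟨(i : ℕ), by rw [Fin.le_def] at h; omega⟩, ?_⟩
        congr
      · rw [hy i h, zero_smul]; exact Submodule.zero_mem _
    · rw [Submodule.span_le]
      rintro y ⟨i, rfl⟩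
      exact lemB _ _ rfl (by rw [Fin.le_def]; simp; omega)
  have : M.rank = Module.finrank ℝ (LinearMap.range M.mulVecLin) := rfl
  rw [this, hspan, finrank_span_eq_card hli, Fintype.card_fin]
end
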